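/- arXiv:1103.0077 — 3 statements merged into one kernel-verified Lean document; each statement's English description precedes it below -/
import Mathlib

section
/- Let k ≥ 1 and let Υ ⊆ F_{2,k}. Then the following identity of formal power series in t with coefficients in ℚ[x] holds: (1 + Σ_{n≥1} (t^n/(kn)!) Σ_{F ∈ F_{n,k}} x^{Υ-mch(F)}) · ((1−x) + Σ_{n≥1} ((x−1)^n t^n/(kn)!) · full_n^Υ) = 1 − x. -/
/-- `F` is a filling of the `k × n` rectangle (row `i`, `1 ≤ i ≤ k`, counted from the
bottom; column `j`, `1 ≤ j ≤ n`) with the integers `1, …, kn`, each used exactly once,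
whose entries strictly increase up each column.  Cells outside the rectangle carry `0`. -/
def IsFilling (n k : ℕ) (F : ℕ → ℕ → ℕ) : Prop :=
  (∀ i j, F i j ≠ 0 → 1 ≤ i ∧ i ≤ k ∧ 1 ≤ j ∧ j ≤ n) ∧
  Set.BijOn (fun p : ℕ × ℕ => F p.1 p.2) (Set.Icc 1 k ×ˢ Set.Icc 1 n) (Set.Icc 1 (k * n)) ∧
  ∀ i j, 1 ≤ i → i < k → 1 ≤ j → j ≤ n → F i j < F (i + 1) j

/-- The entries of `F` in columns `i, …, i + j - 1` are in the same relative order as the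
`k × j` pattern `P`; i.e. `F` has a `P`-match starting at position `i`. -/
def MatchAt (j k : ℕ) (P F : ℕ → ℕ → ℕ) (i : ℕ) : Prop :=
  ∀ a b c d, 1 ≤ a → a ≤ k → 1 ≤ b → b ≤ j → 1 ≤ c → c ≤ k → 1 ≤ d → d ≤ j →
    (F a (i - 1 + b) < F c (i - 1 + d) ↔ P a b < P c d)

/-- `full_n^Υ`: the number of fillings `F ∈ F_{n,k}` having `Υ`-matches starting at
every position `1, …, n-1` (for two-column patterns `Υ ⊆ F_{2,k}`). -/
noncomputable def fullCount (n k : ℕ) (U : Set (ℕ → ℕ → ℕ)) : ℕ :=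
  Nat.card {F : ℕ → ℕ → ℕ // IsFilling n k F ∧
    ∀ i, 1 ≤ i → i ≤ n - 1 → ∃ P ∈ U, MatchAt 2 k P F i}

/-- `Υ-mch(F)`: the number of positions `1 ≤ i ≤ n-1` at which `F` has an `Υ`-match. -/
noncomputable def mchCount (n k : ℕ) (U : Set (ℕ → ℕ → ℕ)) (F : ℕ → ℕ → ℕ) : ℕ :=
  Set.ncard {i | 1 ≤ i ∧ i ≤ n - 1 ∧ ∃ P ∈ U, MatchAt 2 k P F i}

open Finset Polynomial

def FillOn (n k : ℕ) (A : Finset ℕ) (F : ℕ → ℕ → ℕ) : Prop :=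
  (∀ i j, F i j ≠ 0 → 1 ≤ i ∧ i ≤ k ∧ 1 ≤ j ∧ j ≤ n) ∧
  Set.BijOn (fun p : ℕ × ℕ => F p.1 p.2) (Set.Icc 1 k ×ˢ Set.Icc 1 n) ↑A ∧
  ∀ i j, 1 ≤ i → i < k → 1 ≤ j → j ≤ n → F i j < F (i + 1) j

lemma isFilling_iff_fillOn {n k : ℕ} {F : ℕ → ℕ → ℕ} :
    IsFilling n k F ↔ FillOn n k (Finset.Icc 1 (k * n)) F := by
  unfold IsFilling FillOn; rw [Finset.coe_Icc]

lemma FillOn.mem_val {n k : ℕ} {A : Finset ℕ} {F : ℕ → ℕ → ℕ} (hF : FillOn n k A F)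
    {i j : ℕ} (hi1 : 1 ≤ i) (hik : i ≤ k) (hj1 : 1 ≤ j) (hjn : j ≤ n) : F i j ∈ A := by
  have := hF.2.1.mapsTo (show ((i,j) : ℕ × ℕ) ∈ Set.Icc 1 k ×ˢ Set.Icc 1 n from ⟨⟨hi1, hik⟩, hj1, hjn⟩)
  simpa using this

lemma fillOn_finite (n k : ℕ) (A : Finset ℕ) : {F | FillOn n k A F}.Finite := by
  classical
  have h : {F | FillOn n k A F} ⊆ Set.range
      (fun (g : Fin (k+1) → Fin (n+1) → (insert 0 A : Finset ℕ)) =>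
        fun i j => if hi : i < k+1 then if hj : j < n+1 then (g ⟨i, hi⟩ ⟨j, hj⟩ : ℕ) else 0
          else 0) := by
    intro F hF
    have hmem : ∀ i j, F i j ∈ (insert 0 A : Finset ℕ) := by
      intro i j
      by_cases h0 : F i j = 0
      · simp [h0]
      · obtain ⟨hi1, hik, hj1, hjn⟩ := hF.1 i j h0
        exact Finset.mem_insert_of_mem (hF.mem_val hi1 hik hj1 hjn)
    refine ⟨fun i j => ⟨F i j, hmem i j⟩, ?_⟩
    funext i j
    simp only
    by_cases hi : i < k + 1
    · by_cases hj : j < n + 1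
      · simp [hi, hj]
      · simp only [hi, hj, dite_true, dite_false]
        by_contra h0
        have := hF.1 i j (Ne.symm h0)
        omega
    · simp only [hi, dite_false]
      by_contra h0
      have := hF.1 i j (Ne.symm h0)
      omega
  exact Set.Finite.subset (Set.finite_range _) h

noncomputable def fillFinset (n k : ℕ) (A : Finset ℕ) : Finset (ℕ → ℕ → ℕ) :=
  (fillOn_finite n k A).toFinset

@[simp] lemma mem_fillFinset {n k : ℕ} {A : Finset ℕ} {F : ℕ → ℕ → ℕ} :
    F ∈ fillFinset n k A ↔ FillOn n k A F := by
  simp [fillFinset]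

noncomputable def matchSet (n k : ℕ) (U : Set (ℕ → ℕ → ℕ)) (F : ℕ → ℕ → ℕ) : Finset ℕ :=
  @Finset.filter _ (fun i => ∃ P ∈ U, MatchAt 2 k P F i) (Classical.decPred _)
    (Finset.Icc 1 (n - 1))

lemma mem_matchSet {n k : ℕ} {U : Set (ℕ → ℕ → ℕ)} {F : ℕ → ℕ → ℕ} {i : ℕ} :
    i ∈ matchSet n k U F ↔ 1 ≤ i ∧ i ≤ n - 1 ∧ ∃ P ∈ U, MatchAt 2 k P F i := by
  simp [matchSet, Finset.mem_filter, Finset.mem_Icc, and_assoc]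

section
variable {n k : ℕ} {A B : Finset ℕ} {F : ℕ → ℕ → ℕ} {φ ψ : ℕ → ℕ} {U : Set (ℕ → ℕ → ℕ)}

lemma exists_orderBij (A B : Finset ℕ) (h : A.card = B.card) :
    ∃ φ ψ : ℕ → ℕ, StrictMonoOn φ ↑A ∧ (∀ a ∈ A, φ a ∈ B) ∧ (∀ b ∈ B, ψ b ∈ A) ∧
      (∀ a ∈ A, ψ (φ a) = a) ∧ (∀ b ∈ B, φ (ψ b) = b) := by
  classical
  set e := A.orderIsoOfFin rfl
  set f := B.orderIsoOfFin h.symm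
  refine ⟨fun a => if ha : a ∈ A then (f (e.symm ⟨a, ha⟩) : ℕ) else 0,
    fun b => if hb : b ∈ B then (e (f.symm ⟨b, hb⟩) : ℕ) else 0, ?_, ?_, ?_, ?_, ?_⟩
  · intro a ha a' ha' hlt
    simp only [Finset.mem_coe] at ha ha'
    simp only [ha, ha', dif_pos]
    have h1 : e.symm ⟨a, ha⟩ < e.symm ⟨a', ha'⟩ := by
      rw [OrderIso.lt_iff_lt]; exact Subtype.mk_lt_mk.mpr hlt
    exact_mod_cast f.lt_iff_lt.mpr h1
  · intro a ha; simp only [ha, dif_pos]; exact (f _).2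
  · intro b hb; simp only [hb, dif_pos]; exact (e _).2
  · intro a ha
    simp only [ha, dif_pos]
    have hmem : (f (e.symm ⟨a, ha⟩) : ℕ) ∈ B := (f _).2
    simp only [hmem, dif_pos]
    have h1 : (⟨(f (e.symm ⟨a, ha⟩) : ℕ), hmem⟩ : {x // x ∈ B}) = f (e.symm ⟨a, ha⟩) := rfl
    rw [h1, f.symm_apply_apply]
    simp
  · intro b hb
    simp only [hb, dif_pos]
    have hmem : (e (f.symm ⟨b, hb⟩) : ℕ) ∈ A := (e _).2
    simp only [hmem, dif_pos]
    have h1 : (⟨(e (f.symm ⟨b, hb⟩) : ℕ), hmem⟩ : {x // x ∈ A}) = e (f.symm ⟨b, hb⟩) := rfl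
    rw [h1, e.symm_apply_apply]
    simp

def relabel (φ : ℕ → ℕ) (F : ℕ → ℕ → ℕ) : ℕ → ℕ → ℕ :=
  fun i j => if F i j = 0 then 0 else φ (F i j)

lemma fillOn_relabel (hF : FillOn n k A F) (h0A : 0 ∉ A)
    (hφ : StrictMonoOn φ ↑A) (hB : A.image φ = B) (h0B : 0 ∉ B) :
    FillOn n k B (relabel φ F) := by
  have hne : ∀ i j, 1 ≤ i → i ≤ k → 1 ≤ j → j ≤ n → F i j ≠ 0 := by
    intro i j h1 h2 h3 h4 h0
    exact h0A (h0 ▸ hF.mem_val h1 h2 h3 h4)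
  refine ⟨?_, ?_, ?_⟩
  · intro i j hne0
    apply hF.1
    intro h0; rw [relabel, h0] at hne0; simp at hne0
  · have hinj : Set.InjOn φ ↑A := hφ.injOn
    have hbij : Set.BijOn φ ↑A (φ '' ↑A) := hinj.bijOn_image
    have hcomp := hbij.comp hF.2.1
    have himg : φ '' ↑A = ↑B := by rw [← hB, Finset.coe_image]
    rw [himg] at hcomp
    apply hcomp.congr
    intro p hp
    obtain ⟨⟨h1, h2⟩, h3, h4⟩ := hp
    simp only [Function.comp, relabel, hne p.1 p.2 h1 h2 h3 h4, if_false]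
  · intro i j h1 h2 h3 h4
    have m1 : F i j ∈ A := hF.mem_val h1 (le_of_lt h2) h3 h4
    have m2 : F (i+1) j ∈ A := hF.mem_val (by omega) h2 h3 h4
    have e1 : relabel φ F i j = φ (F i j) := by
      simp [relabel, hne i j h1 (le_of_lt h2) h3 h4]
    have e2 : relabel φ F (i+1) j = φ (F (i+1) j) := by
      simp [relabel, hne (i+1) j (by omega) h2 h3 h4]
    rw [e1, e2]
    exact hφ m1 m2 (hF.2.2 i j h1 h2 h3 h4)

lemma matchSet_relabel (hF : FillOn n k A F) (h0A : 0 ∉ A) (hφ : StrictMonoOn φ ↑A) :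
    matchSet n k U (relabel φ F) = matchSet n k U F := by
  ext i
  simp only [mem_matchSet]
  refine and_congr_right fun hi1 => and_congr_right fun hin => ?_
  have hcol : ∀ b, 1 ≤ b → b ≤ 2 → 1 ≤ i - 1 + b ∧ i - 1 + b ≤ n := by omega
  have key : ∀ a b, 1 ≤ a → a ≤ k → 1 ≤ b → b ≤ 2 →
      relabel φ F a (i - 1 + b) = φ (F a (i - 1 + b)) ∧ F a (i - 1 + b) ∈ A := by
    intro a b ha1 hak hb1 hb2
    obtain ⟨hc1, hc2⟩ := hcol b hb1 hb2
    have hm : F a (i - 1 + b) ∈ A := hF.mem_val ha1 hak hc1 hc2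
    have hne : F a (i - 1 + b) ≠ 0 := fun h0 => h0A (h0 ▸ hm)
    exact ⟨by simp [relabel, hne], hm⟩
  apply exists_congr; intro P
  apply and_congr_right; intro _
  unfold MatchAt
  apply forall₄_congr; intro a b c d
  apply imp_congr_right; intro ha1
  apply imp_congr_right; intro hak
  apply imp_congr_right; intro hb1
  apply imp_congr_right; intro hb2
  apply imp_congr_right; intro hc1
  apply imp_congr_right; intro hck
  apply imp_congr_right; intro hd1
  apply imp_congr_right; intro hd2
  obtain ⟨e1, m1⟩ := key a b ha1 hak hb1 hb2
  obtain ⟨e2, m2⟩ := key c d hc1 hck hd1 hd2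
  rw [e1, e2, hφ.lt_iff_lt m1 m2]

lemma relabel_relabel (hF : FillOn n k A F) (hφ0 : ∀ a ∈ A, φ a ≠ 0)
    (hψφ : ∀ a ∈ A, ψ (φ a) = a) :
    relabel ψ (relabel φ F) = F := by
  funext i j
  by_cases h0 : F i j = 0
  · simp [relabel, h0]
  · obtain ⟨h1, h2, h3, h4⟩ := hF.1 i j h0
    have hm : F i j ∈ A := hF.mem_val h1 h2 h3 h4
    simp [relabel, h0, hφ0 _ hm, hψφ _ hm]
end

section
variable {n k : ℕ} {A B : Finset ℕ} {F : ℕ → ℕ → ℕ} {φ ψ : ℕ → ℕ} {U : Set (ℕ → ℕ → ℕ)}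

noncomputable def HH (n k : ℕ) (U : Set (ℕ → ℕ → ℕ)) (A : Finset ℕ) : Polynomial ℚ :=
  ∑ F ∈ fillFinset n k A, ∑ S ∈ (matchSet n k U F).powerset, (X - 1 : Polynomial ℚ) ^ S.card

noncomputable def fullF (n k : ℕ) (U : Set (ℕ → ℕ → ℕ)) (A : Finset ℕ) : Finset (ℕ → ℕ → ℕ) :=
  @Finset.filter _ (fun F => matchSet n k U F = Finset.Icc 1 (n - 1)) (Classical.decPred _)
    (fillFinset n k A)

lemma orderBij_package (h : A.card = B.card) :
    ∃ φ ψ : ℕ → ℕ, StrictMonoOn φ ↑A ∧ StrictMonoOn ψ ↑B ∧ A.image φ = B ∧ B.image ψ = A ∧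
      (∀ a ∈ A, ψ (φ a) = a) ∧ (∀ b ∈ B, φ (ψ b) = b) := by
  obtain ⟨φ, ψ, hφ, hφB, hψA, hψφ, hφψ⟩ := exists_orderBij A B h
  have hψ : StrictMonoOn ψ ↑B := by
    intro b hb b' hb' hlt
    simp only [Finset.mem_coe] at hb hb'
    by_contra hle
    push_neg at hle
    rcases lt_or_eq_of_le hle with hlt2 | heq
    · have := hφ (Finset.mem_coe.mpr (hψA b' hb')) (Finset.mem_coe.mpr (hψA b hb)) hlt2
      rw [hφψ b hb, hφψ b' hb'] at this
      omega
    · have : φ (ψ b) = φ (ψ b') := by rw [heq]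
      rw [hφψ b hb, hφψ b' hb'] at this
      omega
  have himgφ : A.image φ = B := by
    ext b
    simp only [Finset.mem_image]
    constructor
    · rintro ⟨a, ha, rfl⟩; exact hφB a ha
    · intro hb; exact ⟨ψ b, hψA b hb, hφψ b hb⟩
  have himgψ : B.image ψ = A := by
    ext a
    simp only [Finset.mem_image]
    constructor
    · rintro ⟨b, hb, rfl⟩; exact hψA b hb
    · intro ha; exact ⟨φ a, hφB a ha, hψφ a ha⟩
  exact ⟨φ, ψ, hφ, hψ, himgφ, himgψ, hψφ, hφψ⟩

lemma mem_fullF {F : ℕ → ℕ → ℕ} : F ∈ fullF n k U A ↔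
    FillOn n k A F ∧ matchSet n k U F = Finset.Icc 1 (n - 1) := by
  rw [fullF, @Finset.mem_filter _ _ (Classical.decPred _), mem_fillFinset]

lemma HH_congr (h : A.card = B.card) (h0A : 0 ∉ A) (h0B : 0 ∉ B) :
    HH n k U A = HH n k U B := by
  obtain ⟨φ, ψ, hφ, hψ, himgφ, himgψ, hψφ, hφψ⟩ := orderBij_package h
  have hφ0 : ∀ a ∈ A, φ a ≠ 0 := by
    intro a ha h0; apply h0B; rw [← himgφ, ← h0]; exact Finset.mem_image_of_mem φ ha
  have hψ0 : ∀ b ∈ B, ψ b ≠ 0 := by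
    intro b hb h0; apply h0A; rw [← himgψ, ← h0]; exact Finset.mem_image_of_mem ψ hb
  refine Finset.sum_nbij' (fun F => relabel φ F) (fun F => relabel ψ F) ?_ ?_ ?_ ?_ ?_
  · intro F hF
    rw [mem_fillFinset] at hF ⊢
    exact fillOn_relabel hF h0A hφ himgφ h0B
  · intro F hF
    rw [mem_fillFinset] at hF ⊢
    exact fillOn_relabel hF h0B hψ himgψ h0A
  · intro F hF; exact relabel_relabel (mem_fillFinset.mp hF) hφ0 hψφ
  · intro F hF; exact relabel_relabel (mem_fillFinset.mp hF) hψ0 hφψ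
  · intro F hF
    rw [matchSet_relabel (mem_fillFinset.mp hF) h0A hφ]

lemma fullF_card_congr (h : A.card = B.card) (h0A : 0 ∉ A) (h0B : 0 ∉ B) :
    (fullF n k U A).card = (fullF n k U B).card := by
  obtain ⟨φ, ψ, hφ, hψ, himgφ, himgψ, hψφ, hφψ⟩ := orderBij_package h
  have hφ0 : ∀ a ∈ A, φ a ≠ 0 := by
    intro a ha h0; apply h0B; rw [← himgφ, ← h0]; exact Finset.mem_image_of_mem φ ha
  have hψ0 : ∀ b ∈ B, ψ b ≠ 0 := by
    intro b hb h0; apply h0A; rw [← himgψ, ← h0]; exact Finset.mem_image_of_mem ψ hb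
  have memfull : ∀ F, F ∈ fullF n k U A ↔
      FillOn n k A F ∧ matchSet n k U F = Finset.Icc 1 (n - 1) := fun _ => mem_fullF
  have memfullB : ∀ F, F ∈ fullF n k U B ↔
      FillOn n k B F ∧ matchSet n k U F = Finset.Icc 1 (n - 1) := fun _ => mem_fullF
  refine Finset.card_bij' (fun F _ => relabel φ F) (fun F _ => relabel ψ F) ?_ ?_ ?_ ?_
  · intro F hF
    obtain ⟨h1, h2⟩ := (memfull F).mp hF
    refine (memfullB _).mpr ⟨fillOn_relabel h1 h0A hφ himgφ h0B, ?_⟩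
    rw [matchSet_relabel h1 h0A hφ, h2]
  · intro F hF
    obtain ⟨h1, h2⟩ := (memfullB F).mp hF
    refine (memfull _).mpr ⟨fillOn_relabel h1 h0B hψ himgψ h0A, ?_⟩
    rw [matchSet_relabel h1 h0B hψ, h2]
  · intro F hF; exact relabel_relabel ((memfull F).mp hF).1 hφ0 hψφ
  · intro F hF; exact relabel_relabel ((memfullB F).mp hF).1 hψ0 hφψ

lemma fillOn_zero_iff : FillOn 0 k A F ↔ (A = ∅ ∧ F = fun _ _ => 0) := by
  constructor
  · intro hF
    have hF0 : F = fun _ _ => 0 := by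
      funext i j
      by_contra h0
      have := hF.1 i j h0
      omega
    refine ⟨?_, hF0⟩
    have := hF.2.1.surjOn
    by_contra hA
    obtain ⟨a, ha⟩ := Finset.nonempty_iff_ne_empty.mpr hA
    obtain ⟨⟨p1, p2⟩, hp, hpa⟩ := this (Finset.mem_coe.mpr ha)
    obtain ⟨_, hp2⟩ := hp
    simp only [Set.mem_Icc] at hp2
    omega
  · rintro ⟨rfl, rfl⟩
    refine ⟨by simp, ?_, by intro i j _ _ h3 h4; omega⟩
    have : (Set.Icc 1 k ×ˢ Set.Icc (1:ℕ) 0) = ∅ := by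
      simp [Set.Icc_eq_empty_of_lt]
    rw [this]
    simpa using Set.bijOn_empty _

lemma fillFinset_zero : fillFinset 0 k (∅ : Finset ℕ) = {fun _ _ => 0} := by
  ext F
  simp only [mem_fillFinset, Finset.mem_singleton, fillOn_zero_iff, true_and]

lemma matchSet_zero {F : ℕ → ℕ → ℕ} : matchSet 0 k U F = ∅ := by
  simp [matchSet]

lemma HH_zero : HH 0 k U (∅ : Finset ℕ) = 1 := by
  rw [HH, fillFinset_zero]
  simp [matchSet_zero]

lemma sum_powerset_pow (T : Finset ℕ) :
    ∑ S ∈ T.powerset, (X - 1 : Polynomial ℚ) ^ S.card = X ^ T.card := by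
  classical
  induction T using Finset.induction with
  | empty => simp
  | @insert a T ha ih =>
    rw [Finset.sum_powerset_insert ha]
    have : ∀ S ∈ T.powerset, (X - 1 : Polynomial ℚ) ^ (insert a S).card
        = (X - 1) * (X - 1) ^ S.card := by
      intro S hS
      rw [Finset.card_insert_of_notMem (fun h => ha (Finset.mem_powerset.mp hS h)), pow_succ]
      ring
    rw [Finset.sum_congr rfl this, ← Finset.mul_sum, ih,
      Finset.card_insert_of_notMem ha, pow_succ]
    ring

lemma mchCount_eq_card (n k : ℕ) (U : Set (ℕ → ℕ → ℕ)) (F : ℕ → ℕ → ℕ) :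
    mchCount n k U F = (matchSet n k U F).card := by
  rw [mchCount, ← Set.ncard_coe_finset]
  congr 1
  ext i
  simp [mem_matchSet, and_assoc]

lemma claimA (n k : ℕ) (U : Set (ℕ → ℕ → ℕ)) :
    ∑ F ∈ fillFinset n k (Finset.Icc 1 (k * n)), (X : Polynomial ℚ) ^ mchCount n k U F
      = HH n k U (Finset.Icc 1 (k * n)) := by
  rw [HH]
  apply Finset.sum_congr rfl
  intro F _
  rw [mchCount_eq_card, sum_powerset_pow]

lemma fullCount_eq (n k : ℕ) (U : Set (ℕ → ℕ → ℕ)) :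
    fullCount n k U = (fullF n k U (Finset.Icc 1 (k * n))).card := by
  have hset : {F : ℕ → ℕ → ℕ | IsFilling n k F ∧
      ∀ i, 1 ≤ i → i ≤ n - 1 → ∃ P ∈ U, MatchAt 2 k P F i}
      = ↑(fullF n k U (Finset.Icc 1 (k * n))) := by
    ext F
    rw [Set.mem_setOf_eq, Finset.mem_coe, mem_fullF, isFilling_iff_fillOn]
    apply and_congr_right
    intro hF
    constructor
    · intro hall
      apply Finset.Subset.antisymm
      · intro i hi; rw [mem_matchSet] at hi; exact Finset.mem_Icc.mpr ⟨hi.1, hi.2.1⟩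
      · intro i hi
        rw [Finset.mem_Icc] at hi
        exact mem_matchSet.mpr ⟨hi.1, hi.2, hall i hi.1 hi.2⟩
    · intro heq i h1 h2
      have : i ∈ matchSet n k U F := heq ▸ Finset.mem_Icc.mpr ⟨h1, h2⟩
      exact (mem_matchSet.mp this).2.2
  rw [← Set.ncard_coe_finset, ← hset, ← Nat.card_coe_set_eq]
  rfl
end

section
variable {n m nm k : ℕ} {A A1 A2 : Finset ℕ} {F F1 F2 P : ℕ → ℕ → ℕ}
  {U : Set (ℕ → ℕ → ℕ)} {i : ℕ}

def trunc (m : ℕ) (F : ℕ → ℕ → ℕ) : ℕ → ℕ → ℕ := fun i j => if j ≤ m then F i j else 0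

def shiftF (m nm : ℕ) (F : ℕ → ℕ → ℕ) : ℕ → ℕ → ℕ :=
  fun i j => if 1 ≤ j ∧ j ≤ nm then F i (j + m) else 0

def combine (m : ℕ) (F1 F2 : ℕ → ℕ → ℕ) : ℕ → ℕ → ℕ :=
  fun i j => if j ≤ m then F1 i j else F2 i (j - m)

noncomputable def leftVals (m k : ℕ) (F : ℕ → ℕ → ℕ) : Finset ℕ :=
  (Finset.Icc 1 k ×ˢ Finset.Icc 1 m).image (fun p : ℕ × ℕ => F p.1 p.2)

lemma coe_rect (a b : ℕ) : ((Finset.Icc 1 a ×ˢ Finset.Icc 1 b : Finset (ℕ × ℕ)) : Set (ℕ × ℕ))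
    = Set.Icc 1 a ×ˢ Set.Icc 1 b := by
  rw [Finset.coe_product, Finset.coe_Icc, Finset.coe_Icc]

lemma rect_subset (hm : m ≤ n) :
    (Set.Icc 1 k ×ˢ Set.Icc 1 m : Set (ℕ × ℕ)) ⊆ Set.Icc 1 k ×ˢ Set.Icc 1 n := by
  rintro ⟨p1, p2⟩ ⟨h1, h2⟩
  exact ⟨h1, h2.1, le_trans h2.2 hm⟩

lemma fillOn_trunc (hF : FillOn n k A F) (hm : m ≤ n) :
    FillOn m k (leftVals m k F) (trunc m F) := by
  refine ⟨?_, ?_, ?_⟩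
  · intro i j h0
    simp only [trunc] at h0
    by_cases hj : j ≤ m
    · rw [if_pos hj] at h0
      obtain ⟨a, b, c, _⟩ := hF.1 i j h0
      exact ⟨a, b, c, hj⟩
    · rw [if_neg hj] at h0; simp at h0
  · have hinj : Set.InjOn (fun p : ℕ × ℕ => F p.1 p.2) (Set.Icc 1 k ×ˢ Set.Icc 1 m) :=
      hF.2.1.injOn.mono (rect_subset hm)
    have hb := hinj.bijOn_image
    have himg : (fun p : ℕ × ℕ => F p.1 p.2) '' (Set.Icc 1 k ×ˢ Set.Icc 1 m)
        = ↑(leftVals m k F) := by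
      rw [leftVals, Finset.coe_image, coe_rect]
    rw [himg] at hb
    apply hb.congr
    rintro ⟨p1, p2⟩ hp
    simp only [trunc]
    rw [if_pos hp.2.2]
  · intro i j h1 h2 h3 h4
    simp only [trunc, if_pos h4]
    exact hF.2.2 i j h1 h2 h3 (le_trans h4 hm)

lemma leftVals_subset (hF : FillOn n k A F) (hm : m ≤ n) : leftVals m k F ⊆ A := by
  intro a ha
  rw [leftVals, Finset.mem_image] at ha
  obtain ⟨⟨p1, p2⟩, hp, rfl⟩ := ha
  rw [Finset.mem_product, Finset.mem_Icc, Finset.mem_Icc] at hp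
  exact hF.mem_val hp.1.1 hp.1.2 hp.2.1 (le_trans hp.2.2 hm)

lemma leftVals_card (hF : FillOn n k A F) (hm : m ≤ n) : (leftVals m k F).card = k * m := by
  rw [leftVals, Finset.card_image_of_injOn, Finset.card_product, Nat.card_Icc, Nat.card_Icc]
  · simp
  · rw [coe_rect]
    exact hF.2.1.injOn.mono (rect_subset hm)

lemma fillOn_shiftF (hF : FillOn n k A F) (hm : m ≤ n) :
    FillOn (n - m) k (A \ leftVals m k F) (shiftF m (n - m) F) := by
  refine ⟨?_, ⟨?_, ?_, ?_⟩, ?_⟩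
  · intro i j h0
    simp only [shiftF] at h0
    by_cases hj : 1 ≤ j ∧ j ≤ n - m
    · rw [if_pos hj] at h0
      obtain ⟨a, b, c, d⟩ := hF.1 i (j + m) h0
      exact ⟨a, b, hj.1, hj.2⟩
    · rw [if_neg hj] at h0; simp at h0
  · rintro ⟨p1, p2⟩ ⟨hp1, hp2⟩
    simp only [Set.mem_Icc] at hp1 hp2
    have hg : 1 ≤ p2 ∧ p2 ≤ n - m := hp2
    simp only [shiftF, if_pos hg, Finset.coe_sdiff, Set.mem_diff]
    constructor
    · exact Finset.mem_coe.mpr (hF.mem_val hp1.1 hp1.2 (by omega) (by omega))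
    · intro hmem
      rw [Finset.mem_coe, leftVals, Finset.mem_image] at hmem
      obtain ⟨⟨q1, q2⟩, hq, hqe⟩ := hmem
      rw [Finset.mem_product, Finset.mem_Icc, Finset.mem_Icc] at hq
      have := hF.2.1.injOn
        (show ((q1, q2) : ℕ × ℕ) ∈ Set.Icc 1 k ×ˢ Set.Icc 1 n from
          ⟨⟨hq.1.1, hq.1.2⟩, hq.2.1, le_trans hq.2.2 hm⟩)
        (show ((p1, p2 + m) : ℕ × ℕ) ∈ Set.Icc 1 k ×ˢ Set.Icc 1 n from
          ⟨⟨hp1.1, hp1.2⟩, by omega, by omega⟩) hqe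
      have : q2 = p2 + m := congrArg Prod.snd this
      omega
  · rintro ⟨p1, p2⟩ ⟨hp1, hp2⟩ ⟨q1, q2⟩ ⟨hq1, hq2⟩ he
    simp only [Set.mem_Icc] at hp1 hp2 hq1 hq2
    simp only [shiftF, if_pos (show 1 ≤ p2 ∧ p2 ≤ n - m from hp2),
      if_pos (show 1 ≤ q2 ∧ q2 ≤ n - m from hq2)] at he
    have := hF.2.1.injOn
      (show ((p1, p2 + m) : ℕ × ℕ) ∈ Set.Icc 1 k ×ˢ Set.Icc 1 n from
        ⟨⟨hp1.1, hp1.2⟩, by omega, by omega⟩)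
      (show ((q1, q2 + m) : ℕ × ℕ) ∈ Set.Icc 1 k ×ˢ Set.Icc 1 n from
        ⟨⟨hq1.1, hq1.2⟩, by omega, by omega⟩) he
    have h1 : p1 = q1 := congrArg Prod.fst this
    have h2 : p2 + m = q2 + m := congrArg Prod.snd this
    simp only [Prod.mk.injEq]
    omega
  · intro a ha
    rw [Finset.coe_sdiff, Set.mem_diff] at ha
    obtain ⟨haA, haL⟩ := ha
    obtain ⟨⟨p1, p2⟩, hp, hpa⟩ := hF.2.1.surjOn haA
    obtain ⟨hp1, hp2⟩ := hp
    simp only [Set.mem_Icc] at hp1 hp2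
    have hgt : m + 1 ≤ p2 := by
      by_contra hle
      apply haL
      rw [Finset.mem_coe, leftVals, Finset.mem_image]
      exact ⟨(p1, p2), by
        rw [Finset.mem_product, Finset.mem_Icc, Finset.mem_Icc]
        exact ⟨⟨hp1.1, hp1.2⟩, hp2.1, by omega⟩, hpa⟩
    refine ⟨(p1, p2 - m), ⟨⟨hp1.1, hp1.2⟩, by simp only [Set.mem_Icc]; omega⟩, ?_⟩
    simp only [shiftF, if_pos (show 1 ≤ p2 - m ∧ p2 - m ≤ n - m by omega)]
    rw [show p2 - m + m = p2 by omega]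
    exact hpa
  · intro i j h1 h2 h3 h4
    simp only [shiftF, if_pos (show 1 ≤ j ∧ j ≤ n - m from ⟨h3, h4⟩)]
    exact hF.2.2 i (j + m) h1 h2 (by omega) (by omega)

lemma fillOn_combine (h1 : FillOn m k A1 F1) (h2 : FillOn (n - m) k A2 F2)
    (hdisj : Disjoint A1 A2) (hm : m ≤ n) :
    FillOn n k (A1 ∪ A2) (combine m F1 F2) := by
  refine ⟨?_, ⟨?_, ?_, ?_⟩, ?_⟩
  · intro i j h0
    simp only [combine] at h0
    by_cases hj : j ≤ m
    · rw [if_pos hj] at h0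
      obtain ⟨a, b, c, d⟩ := h1.1 i j h0
      exact ⟨a, b, c, by omega⟩
    · rw [if_neg hj] at h0
      obtain ⟨a, b, c, d⟩ := h2.1 i (j - m) h0
      exact ⟨a, b, by omega, by omega⟩
  · rintro ⟨p1, p2⟩ ⟨hp1, hp2⟩
    simp only [Set.mem_Icc] at hp1 hp2
    simp only [Finset.coe_union, Set.mem_union, combine]
    by_cases hj : p2 ≤ m
    · rw [if_pos hj]
      exact Or.inl (Finset.mem_coe.mpr (h1.mem_val hp1.1 hp1.2 hp2.1 hj))
    · rw [if_neg hj]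
      exact Or.inr (Finset.mem_coe.mpr (h2.mem_val hp1.1 hp1.2 (by omega) (by omega)))
  · rintro ⟨p1, p2⟩ ⟨hp1, hp2⟩ ⟨q1, q2⟩ ⟨hq1, hq2⟩ he
    simp only [Set.mem_Icc] at hp1 hp2 hq1 hq2
    simp only [combine] at he
    by_cases hp : p2 ≤ m <;> by_cases hq : q2 ≤ m
    · rw [if_pos hp, if_pos hq] at he
      exact h1.2.1.injOn ⟨⟨hp1.1, hp1.2⟩, hp2.1, hp⟩ ⟨⟨hq1.1, hq1.2⟩, hq2.1, hq⟩ he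
    · rw [if_pos hp, if_neg hq] at he
      exfalso
      have m1 : F1 p1 p2 ∈ A1 := h1.mem_val hp1.1 hp1.2 hp2.1 hp
      have m2 : F2 q1 (q2 - m) ∈ A2 := h2.mem_val hq1.1 hq1.2 (by omega) (by omega)
      rw [he] at m1
      exact Finset.disjoint_left.mp hdisj m1 m2
    · rw [if_neg hp, if_pos hq] at he
      exfalso
      have m1 : F2 p1 (p2 - m) ∈ A2 := h2.mem_val hp1.1 hp1.2 (by omega) (by omega)
      have m2 : F1 q1 q2 ∈ A1 := h1.mem_val hq1.1 hq1.2 hq2.1 hq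
      rw [← he] at m2
      exact Finset.disjoint_left.mp hdisj m2 m1
    · rw [if_neg hp, if_neg hq] at he
      have := h2.2.1.injOn
        (show ((p1, p2 - m) : ℕ × ℕ) ∈ Set.Icc 1 k ×ˢ Set.Icc 1 (n - m) from
          ⟨⟨hp1.1, hp1.2⟩, by omega, by omega⟩)
        (show ((q1, q2 - m) : ℕ × ℕ) ∈ Set.Icc 1 k ×ˢ Set.Icc 1 (n - m) from
          ⟨⟨hq1.1, hq1.2⟩, by omega, by omega⟩) he
      have e1 : p1 = q1 := congrArg Prod.fst this
      have e2 : p2 - m = q2 - m := congrArg Prod.snd this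
      simp only [Prod.mk.injEq]
      omega
  · intro a ha
    rw [Finset.coe_union, Set.mem_union] at ha
    rcases ha with ha | ha
    · obtain ⟨⟨p1, p2⟩, hp, hpa⟩ := h1.2.1.surjOn (Finset.mem_coe.mpr (Finset.mem_coe.mp ha))
      obtain ⟨hp1, hp2⟩ := hp
      simp only [Set.mem_Icc] at hp1 hp2
      refine ⟨(p1, p2), ⟨⟨hp1.1, hp1.2⟩, by simp only [Set.mem_Icc]; omega⟩, ?_⟩
      simp only [combine, if_pos hp2.2]
      exact hpa
    · obtain ⟨⟨p1, p2⟩, hp, hpa⟩ := h2.2.1.surjOn (Finset.mem_coe.mpr (Finset.mem_coe.mp ha))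
      obtain ⟨hp1, hp2⟩ := hp
      simp only [Set.mem_Icc] at hp1 hp2
      refine ⟨(p1, p2 + m), ⟨⟨hp1.1, hp1.2⟩, by simp only [Set.mem_Icc]; omega⟩, ?_⟩
      simp only [combine, if_neg (show ¬ p2 + m ≤ m by omega)]
      rw [show p2 + m - m = p2 by omega]
      exact hpa
  · intro i j hi1 hik hj1 hjn
    simp only [combine]
    by_cases hj : j ≤ m
    · simp only [if_pos hj]
      exact h1.2.2 i j hi1 hik hj1 hj
    · simp only [if_neg hj]
      exact h2.2.2 i (j - m) hi1 hik (by omega) (by omega)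
end

section
variable {n m nm k : ℕ} {A A1 A2 : Finset ℕ} {F F1 F2 P : ℕ → ℕ → ℕ}
  {U : Set (ℕ → ℕ → ℕ)} {i : ℕ}

lemma combine_trunc_shiftF (hF : FillOn n k A F) (hm : m ≤ n) :
    combine m (trunc m F) (shiftF m (n - m) F) = F := by
  funext i j
  simp only [combine, trunc, shiftF]
  by_cases hj : j ≤ m
  · rw [if_pos hj, if_pos hj]
  · rw [if_neg hj]
    by_cases hj2 : j ≤ n
    · rw [if_pos (show 1 ≤ j - m ∧ j - m ≤ n - m by omega), show j - m + m = j by omega]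
    · rw [if_neg (show ¬ (1 ≤ j - m ∧ j - m ≤ n - m) by omega)]
      by_contra h0
      have := hF.1 i j (Ne.symm h0)
      omega

lemma trunc_combine (h1 : FillOn m k A1 F1) :
    trunc m (combine m F1 F2) = F1 := by
  funext i j
  simp only [trunc, combine]
  by_cases hj : j ≤ m
  · rw [if_pos hj, if_pos hj]
  · rw [if_neg hj]
    by_contra h0
    have := h1.1 i j (Ne.symm h0)
    omega

lemma shiftF_combine (h2 : FillOn nm k A2 F2) :
    shiftF m nm (combine m F1 F2) = F2 := by
  funext i j
  simp only [shiftF, combine]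
  by_cases hj : 1 ≤ j ∧ j ≤ nm
  · rw [if_pos hj, if_neg (show ¬ j + m ≤ m by omega), show j + m - m = j by omega]
  · rw [if_neg hj]
    by_contra h0
    have := h2.1 i j (Ne.symm h0)
    omega

lemma leftVals_combine (h1 : FillOn m k A1 F1) :
    leftVals m k (combine m F1 F2) = A1 := by
  have : leftVals m k (combine m F1 F2) = leftVals m k F1 := by
    rw [leftVals, leftVals]
    apply Finset.image_congr
    rintro ⟨p1, p2⟩ hp
    rw [Finset.coe_product, Set.mem_prod] at hp
    simp only [Finset.mem_coe, Finset.mem_Icc] at hp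
    simp only [combine, if_pos hp.2.2]
  rw [this]
  apply Finset.coe_injective
  rw [leftVals, Finset.coe_image, coe_rect]
  exact h1.2.1.image_eq

lemma matchAt_congr' {G : ℕ → ℕ → ℕ}
    (h : ∀ a b, 1 ≤ a → a ≤ k → 1 ≤ b → b ≤ 2 → F a (i - 1 + b) = G a (i - 1 + b)) :
    MatchAt 2 k P F i ↔ MatchAt 2 k P G i := by
  unfold MatchAt
  constructor <;> intro hm a b c d ha1 hak hb1 hb2 hc1 hck hd1 hd2
  · rw [← h a b ha1 hak hb1 hb2, ← h c d hc1 hck hd1 hd2]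
    exact hm a b c d ha1 hak hb1 hb2 hc1 hck hd1 hd2
  · rw [h a b ha1 hak hb1 hb2, h c d hc1 hck hd1 hd2]
    exact hm a b c d ha1 hak hb1 hb2 hc1 hck hd1 hd2

lemma matchAt_trunc (hi1 : 1 ≤ i) (him : i + 1 ≤ m) :
    MatchAt 2 k P (trunc m F) i ↔ MatchAt 2 k P F i := by
  apply matchAt_congr'
  intro a b _ _ hb1 hb2
  simp only [trunc]
  rw [if_pos (by omega)]

lemma matchAt_shiftF (hi1 : 1 ≤ i) (hin : i + 1 ≤ nm) :
    MatchAt 2 k P (shiftF m nm F) i ↔ MatchAt 2 k P F (i + m) := by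
  have key : ∀ a b, 1 ≤ b → b ≤ 2 → shiftF m nm F a (i - 1 + b) = F a (i + m - 1 + b) := by
    intro a b hb1 hb2
    simp only [shiftF]
    rw [if_pos (show 1 ≤ i - 1 + b ∧ i - 1 + b ≤ nm by omega)]
    congr 1
    omega
  unfold MatchAt
  constructor <;> intro hm a b c d ha1 hak hb1 hb2 hc1 hck hd1 hd2
  · rw [← key a b hb1 hb2, ← key c d hd1 hd2]
    exact hm a b c d ha1 hak hb1 hb2 hc1 hck hd1 hd2
  · rw [key a b hb1 hb2, key c d hd1 hd2]
    exact hm a b c d ha1 hak hb1 hb2 hc1 hck hd1 hd2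

/-- membership transfer for positions within the first `m` columns -/
lemma mem_matchSet_trunc (hn : 1 ≤ n) (hm : m ≤ n) (hi1 : 1 ≤ i) (him : i + 1 ≤ m) :
    (i ∈ matchSet n k U F ↔ i ∈ matchSet m k U (trunc m F)) := by
  simp only [mem_matchSet]
  constructor
  · rintro ⟨_, _, P, hP, hmt⟩
    exact ⟨hi1, by omega, P, hP, (matchAt_trunc hi1 him).mpr hmt⟩
  · rintro ⟨_, _, P, hP, hmt⟩
    exact ⟨hi1, by omega, P, hP, (matchAt_trunc hi1 him).mp hmt⟩

/-- membership transfer for positions within the last `n - m` columns -/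
lemma mem_matchSet_shiftF (hm : m ≤ n) (hi1 : 1 ≤ i) (hin : i + 1 ≤ n - m) :
    (i + m ∈ matchSet n k U F ↔ i ∈ matchSet (n - m) k U (shiftF m (n - m) F)) := by
  simp only [mem_matchSet]
  constructor
  · rintro ⟨_, _, P, hP, hmt⟩
    exact ⟨hi1, by omega, P, hP, (matchAt_shiftF hi1 hin).mpr hmt⟩
  · rintro ⟨_, _, P, hP, hmt⟩
    exact ⟨by omega, by omega, P, hP, (matchAt_shiftF hi1 hin).mp hmt⟩
end

section
variable {n m k : ℕ} {A : Finset ℕ} {F : ℕ → ℕ → ℕ} {U : Set (ℕ → ℕ → ℕ)} {i : ℕ}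

def mOf (n : ℕ) (S : Finset ℕ) : ℕ := ((Finset.Icc 1 (n - 1)) \ S).sup id

lemma matchSet_subset : matchSet n k U F ⊆ Finset.Icc 1 (n - 1) := by
  intro i hi
  rw [Finset.mem_Icc]
  exact ⟨(mem_matchSet.mp hi).1, (mem_matchSet.mp hi).2.1⟩

lemma mOf_spec {S : Finset ℕ} (hS : S ⊆ Finset.Icc 1 (n - 1)) :
    mOf n S ≤ n - 1 ∧ mOf n S ∉ S ∧ ∀ i, mOf n S < i → i ≤ n - 1 → i ∈ S := by
  have hle : mOf n S ≤ n - 1 := Finset.sup_le (fun i hi => by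
    rw [Finset.mem_sdiff, Finset.mem_Icc] at hi; exact hi.1.2)
  have htail : ∀ i, mOf n S < i → i ≤ n - 1 → i ∈ S := by
    intro i hmi hin
    by_contra hiS
    have hiD : i ∈ (Finset.Icc 1 (n - 1)) \ S := by
      rw [Finset.mem_sdiff, Finset.mem_Icc]
      exact ⟨⟨by omega, hin⟩, hiS⟩
    have h2 : i ≤ mOf n S := Finset.le_sup (f := id) hiD
    omega
  refine ⟨hle, ?_, htail⟩
  by_cases hm0 : mOf n S = 0
  · rw [hm0]
    intro h0
    have := hS h0
    rw [Finset.mem_Icc] at this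
    omega
  · have hne : ((Finset.Icc 1 (n - 1)) \ S).Nonempty := by
      by_contra he
      rw [Finset.not_nonempty_iff_eq_empty] at he
      rw [mOf, he, Finset.sup_empty] at hm0
      exact hm0 rfl
    obtain ⟨b, hb, hbe⟩ := Finset.exists_mem_eq_sup _ hne id
    rw [mOf, hbe]
    simp only [id]
    rw [Finset.mem_sdiff] at hb
    exact hb.2

lemma mOf_eq {S : Finset ℕ} (hS : S ⊆ Finset.Icc 1 (n - 1)) (hmn : m ≤ n - 1)
    (hmS : m ∉ S) (htail : ∀ i, m < i → i ≤ n - 1 → i ∈ S) :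
    mOf n S = m := by
  apply le_antisymm
  · apply Finset.sup_le
    intro i hi
    rw [Finset.mem_sdiff, Finset.mem_Icc] at hi
    simp only [id]
    by_contra h
    push_neg at h
    exact hi.2 (htail i (by omega) hi.1.2)
  · by_cases hm0 : m = 0
    · omega
    · exact Finset.le_sup (f := id) (by
        rw [Finset.mem_sdiff, Finset.mem_Icc]
        exact ⟨⟨by omega, hmn⟩, hmS⟩)

lemma coreBij (k : ℕ) (U : Set (ℕ → ℕ → ℕ)) {n : ℕ} (hn : 1 ≤ n) :
    ∑ p ∈ (fillFinset n k (Finset.Icc 1 (k * n))).sigma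
        (fun F => (matchSet n k U F).powerset),
      ((X : Polynomial ℚ) - 1) ^ p.2.card
    = ∑ q ∈ (Finset.range n).sigma (fun m =>
        ((Finset.Icc 1 (k * n)).powersetCard (k * m)).sigma (fun A =>
          (fillFinset m k A).sigma (fun F1 =>
            ((matchSet m k U F1).powerset).sigma (fun S1 =>
              fullF (n - m) k U (Finset.Icc 1 (k * n) \ A))))),
      ((X : Polynomial ℚ) - 1) ^ (q.2.2.2.1.card + (n - 1 - q.1)) := by
  classical
  refine Finset.sum_nbij'
    (fun p => ⟨mOf n p.2, leftVals (mOf n p.2) k p.1, trunc (mOf n p.2) p.1,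
      p.2.filter (· < mOf n p.2), shiftF (mOf n p.2) (n - mOf n p.2) p.1⟩)
    (fun q => ⟨combine q.1 q.2.2.1 q.2.2.2.2, q.2.2.2.1 ∪ Finset.Icc (q.1 + 1) (n - 1)⟩)
    ?_ ?_ ?_ ?_ ?_
  · -- forward map lands in D2
    rintro ⟨F, S⟩ hp
    rw [Finset.mem_sigma, mem_fillFinset, Finset.mem_powerset] at hp
    obtain ⟨hF, hS⟩ := hp
    have hSb : S ⊆ Finset.Icc 1 (n - 1) := hS.trans matchSet_subset
    obtain ⟨hle, hnotin, htail⟩ := mOf_spec hSb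
    obtain ⟨m, hmdef⟩ : ∃ m', mOf n S = m' := ⟨_, rfl⟩
    rw [hmdef] at hle hnotin htail
    have hmn : m ≤ n := by omega
    dsimp only
    rw [hmdef]
    simp only [Finset.mem_sigma]
    refine ⟨?_, ?_, ?_, ?_, ?_⟩
    · rw [Finset.mem_range]; omega
    · rw [Finset.mem_powersetCard]
      exact ⟨leftVals_subset hF hmn, leftVals_card hF hmn⟩
    · rw [mem_fillFinset]; exact fillOn_trunc hF hmn
    · rw [Finset.mem_powerset]
      intro i hi
      rw [Finset.mem_filter] at hi
      obtain ⟨hiS, hilt⟩ := hi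
      have hims := hS hiS
      have h1i : 1 ≤ i := (mem_matchSet.mp hims).1
      exact (mem_matchSet_trunc hn hmn h1i (by omega)).mp hims
    · rw [mem_fullF]
      refine ⟨fillOn_shiftF hF hmn, ?_⟩
      apply Finset.Subset.antisymm matchSet_subset
      intro i hi
      rw [Finset.mem_Icc] at hi
      have h1 : i + m ∈ S := htail (i + m) (by omega) (by omega)
      exact (mem_matchSet_shiftF hmn hi.1 (by omega)).mp (hS h1)
  · -- backward map lands in D1
    rintro ⟨m, A, F1, S1, F2⟩ hq
    simp only [Finset.mem_sigma] at hq
    obtain ⟨hm, hA, hF1, hS1, hF2⟩ := hq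
    rw [Finset.mem_range] at hm
    rw [Finset.mem_powersetCard] at hA
    rw [mem_fillFinset] at hF1
    rw [Finset.mem_powerset] at hS1
    rw [mem_fullF] at hF2
    dsimp only
    have hmn : m ≤ n := by omega
    have hcomb : FillOn n k (Finset.Icc 1 (k * n)) (combine m F1 F2) := by
      have := fillOn_combine hF1 hF2.1 Finset.disjoint_sdiff hmn
      rwa [Finset.union_sdiff_of_subset hA.1] at this
    rw [Finset.mem_sigma, mem_fillFinset, Finset.mem_powerset]
    refine ⟨hcomb, ?_⟩
    intro i hi
    rw [Finset.mem_union] at hi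
    rcases hi with hi | hi
    · have him := hS1 hi
      obtain ⟨h1i, him1, _⟩ := mem_matchSet.mp him
      have : i ∈ matchSet m k U (trunc m (combine m F1 F2)) := by
        rwa [trunc_combine hF1]
      exact (mem_matchSet_trunc hn hmn h1i (by omega)).mpr this
    · rw [Finset.mem_Icc] at hi
      have h2 : i - m ∈ matchSet (n - m) k U (shiftF m (n - m) (combine m F1 F2)) := by
        rw [shiftF_combine hF2.1, hF2.2, Finset.mem_Icc]
        omega
      have := (mem_matchSet_shiftF (U := U) hmn (i := i - m) (by omega) (by omega)).mpr h2
      rwa [show i - m + m = i by omega] at this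
  · -- j ∘ i = id
    rintro ⟨F, S⟩ hp
    rw [Finset.mem_sigma, mem_fillFinset, Finset.mem_powerset] at hp
    obtain ⟨hF, hS⟩ := hp
    have hSb : S ⊆ Finset.Icc 1 (n - 1) := hS.trans matchSet_subset
    obtain ⟨hle, hnotin, htail⟩ := mOf_spec hSb
    obtain ⟨m, hmdef⟩ : ∃ m', mOf n S = m' := ⟨_, rfl⟩
    rw [hmdef] at hle hnotin htail
    have hmn : m ≤ n := by omega
    have e1 : combine m (trunc m F) (shiftF m (n - m) F) = F :=
      combine_trunc_shiftF hF hmn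
    have e2 : S.filter (· < m) ∪ Finset.Icc (m + 1) (n - 1) = S := by
      ext i
      rw [Finset.mem_union, Finset.mem_filter, Finset.mem_Icc]
      constructor
      · rintro (⟨h, _⟩ | h)
        · exact h
        · exact htail i (by omega) h.2
      · intro hiS
        have hb := hSb hiS
        rw [Finset.mem_Icc] at hb
        have hne : i ≠ m := fun h => hnotin (h ▸ hiS)
        rcases lt_or_gt_of_ne hne with h | h
        · exact Or.inl ⟨hiS, h⟩
        · exact Or.inr ⟨by omega, hb.2⟩
    dsimp only
    rw [hmdef]
    simp only [e1, e2]
  · -- i ∘ j = id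
    rintro ⟨m, A, F1, S1, F2⟩ hq
    simp only [Finset.mem_sigma] at hq
    obtain ⟨hm, hA, hF1, hS1, hF2⟩ := hq
    rw [Finset.mem_range] at hm
    rw [Finset.mem_powersetCard] at hA
    rw [mem_fillFinset] at hF1
    rw [Finset.mem_powerset] at hS1
    rw [mem_fullF] at hF2
    dsimp only
    have hmn : m ≤ n := by omega
    have hS1b : ∀ i ∈ S1, 1 ≤ i ∧ i ≤ m - 1 := by
      intro i hi
      have := matchSet_subset (hS1 hi)
      rw [Finset.mem_Icc] at this
      exact this
    set S := S1 ∪ Finset.Icc (m + 1) (n - 1) with hSdef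
    have hmof : mOf n S = m := by
      apply mOf_eq
      · intro i hi
        rw [hSdef, Finset.mem_union, Finset.mem_Icc] at hi
        rw [Finset.mem_Icc]
        rcases hi with hi | hi
        · have := hS1b i hi; omega
        · omega
      · omega
      · rw [hSdef, Finset.mem_union, Finset.mem_Icc]
        push_neg
        constructor
        · intro hmem; have := hS1b m hmem; omega
        · omega
      · intro i h1 h2
        rw [hSdef, Finset.mem_union, Finset.mem_Icc]
        exact Or.inr ⟨by omega, h2⟩
    have e1 : trunc m (combine m F1 F2) = F1 := trunc_combine hF1
    have e2 : leftVals m k (combine m F1 F2) = A := leftVals_combine hF1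
    have e3 : S.filter (· < m) = S1 := by
      ext i
      rw [Finset.mem_filter, hSdef, Finset.mem_union, Finset.mem_Icc]
      constructor
      · rintro ⟨hi | hi, hlt⟩
        · exact hi
        · omega
      · intro hi
        have := hS1b i hi
        exact ⟨Or.inl hi, by omega⟩
    have e4 : shiftF m (n - m) (combine m F1 F2) = F2 := shiftF_combine hF2.1
    simp only [hmof, e1, e2, e3, e4]
  · -- weights agree
    rintro ⟨F, S⟩ hp
    rw [Finset.mem_sigma, mem_fillFinset, Finset.mem_powerset] at hp
    obtain ⟨hF, hS⟩ := hp
    have hSb : S ⊆ Finset.Icc 1 (n - 1) := hS.trans matchSet_subset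
    obtain ⟨hle, hnotin, htail⟩ := mOf_spec hSb
    obtain ⟨m, hmdef⟩ : ∃ m', mOf n S = m' := ⟨_, rfl⟩
    rw [hmdef] at hle hnotin htail
    have hsplit : (S.filter (· < m)).card + (n - 1 - m) = S.card := by
      have hneg : S.filter (fun i => ¬ i < m) = Finset.Icc (m + 1) (n - 1) := by
        ext i
        rw [Finset.mem_filter, Finset.mem_Icc]
        constructor
        · rintro ⟨hiS, hge⟩
          have hb := hSb hiS
          rw [Finset.mem_Icc] at hb
          have : i ≠ m := fun h => hnotin (h ▸ hiS)
          exact ⟨by omega, hb.2⟩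
        · intro hi
          exact ⟨htail i (by omega) hi.2, by omega⟩
      have := Finset.card_filter_add_card_filter_not (s := S) (p := (· < m))
      rw [hneg, Nat.card_Icc] at this
      omega
    dsimp only
    rw [hmdef, hsplit]
end

section
lemma zero_not_mem_Icc (a : ℕ) : (0 : ℕ) ∉ Finset.Icc 1 a := by
  rw [Finset.mem_Icc]; omega

lemma core (k : ℕ) (U : Set (ℕ → ℕ → ℕ)) {n : ℕ} (hn : 1 ≤ n) :
    HH n k U (Finset.Icc 1 (k * n)) =
      ∑ m ∈ Finset.range n, ((k * n).choose (k * m) : Polynomial ℚ)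
        * HH m k U (Finset.Icc 1 (k * m)) * (X - 1) ^ (n - 1 - m)
        * ((fullF (n - m) k U (Finset.Icc 1 (k * (n - m)))).card : Polynomial ℚ) := by
  classical
  have h1 : HH n k U (Finset.Icc 1 (k * n)) =
      ∑ p ∈ (fillFinset n k (Finset.Icc 1 (k * n))).sigma
        (fun F => (matchSet n k U F).powerset), ((X : Polynomial ℚ) - 1) ^ p.2.card := by
    rw [HH, Finset.sum_sigma]
  rw [h1, coreBij k U hn, Finset.sum_sigma]
  apply Finset.sum_congr rfl
  intro m hm
  rw [Finset.mem_range] at hm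
  rw [Finset.sum_sigma]
  have hA : ∀ A ∈ (Finset.Icc 1 (k * n)).powersetCard (k * m),
      (∑ x ∈ (fillFinset m k A).sigma (fun F1 =>
          ((matchSet m k U F1).powerset).sigma (fun S1 =>
            fullF (n - m) k U (Finset.Icc 1 (k * n) \ A))),
        ((X : Polynomial ℚ) - 1) ^ (x.2.1.card + (n - 1 - m)))
      = HH m k U (Finset.Icc 1 (k * m)) * (X - 1) ^ (n - 1 - m)
        * ((fullF (n - m) k U (Finset.Icc 1 (k * (n - m)))).card : Polynomial ℚ) := by
    intro A hAmem
    rw [Finset.mem_powersetCard] at hAmem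
    have h0A : (0 : ℕ) ∉ A := fun h => by
      have := hAmem.1 h; rw [Finset.mem_Icc] at this; omega
    have hcard : A.card = (Finset.Icc 1 (k * m)).card := by
      rw [Nat.card_Icc]; omega
    have hcomp : (Finset.Icc 1 (k * n) \ A).card = (Finset.Icc 1 (k * (n - m))).card := by
      rw [Finset.card_sdiff_of_subset hAmem.1, Nat.card_Icc, Nat.card_Icc, hAmem.2, Nat.mul_sub]
      omega
    have h0comp : (0 : ℕ) ∉ Finset.Icc 1 (k * n) \ A := fun h => by
      have := Finset.mem_sdiff.mp h
      exact zero_not_mem_Icc _ this.1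
    have hfull : (fullF (n - m) k U (Finset.Icc 1 (k * n) \ A)).card
        = (fullF (n - m) k U (Finset.Icc 1 (k * (n - m)))).card :=
      fullF_card_congr hcomp h0comp (zero_not_mem_Icc _)
    calc (∑ x ∈ (fillFinset m k A).sigma (fun F1 =>
          ((matchSet m k U F1).powerset).sigma (fun S1 =>
            fullF (n - m) k U (Finset.Icc 1 (k * n) \ A))),
        ((X : Polynomial ℚ) - 1) ^ (x.2.1.card + (n - 1 - m)))
        = ∑ F1 ∈ fillFinset m k A, ∑ S1 ∈ (matchSet m k U F1).powerset,
            ((X : Polynomial ℚ) - 1) ^ S1.card *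
              (((X : Polynomial ℚ) - 1) ^ (n - 1 - m) *
                ((fullF (n - m) k U (Finset.Icc 1 (k * (n - m)))).card : Polynomial ℚ)) := by
          rw [Finset.sum_sigma]
          apply Finset.sum_congr rfl
          intro F1 _
          rw [Finset.sum_sigma]
          apply Finset.sum_congr rfl
          intro S1 _
          dsimp only
          rw [Finset.sum_const, hfull, nsmul_eq_mul, pow_add]
          ring
      _ = HH m k U A * ((X - 1) ^ (n - 1 - m) *
            ((fullF (n - m) k U (Finset.Icc 1 (k * (n - m)))).card : Polynomial ℚ)) := by
          rw [HH, Finset.sum_mul]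
          apply Finset.sum_congr rfl
          intro F1 _
          rw [Finset.sum_mul]
      _ = HH m k U (Finset.Icc 1 (k * m)) * (X - 1) ^ (n - 1 - m)
            * ((fullF (n - m) k U (Finset.Icc 1 (k * (n - m)))).card : Polynomial ℚ) := by
          rw [HH_congr hcard h0A (zero_not_mem_Icc _)]
          ring
  rw [Finset.sum_congr rfl hA, Finset.sum_const, Finset.card_powersetCard, Nat.card_Icc]
  simp only [Nat.add_sub_cancel, nsmul_eq_mul]
  push_cast
  ring
end


/-- Theorem: `(1 + Σ_{n≥1} (t^n/(kn)!) Σ_{F ∈ F_{n,k}} x^{Υ-mch(F)}) ·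
((1-x) + Σ_{n≥1} ((x-1)^n t^n/(kn)!) full_n^Υ) = 1 - x` as formal power series in `t`
over `ℚ[x]`. -/
theorem stmt2 (k : ℕ) (hk : 1 ≤ k) (U : Set (ℕ → ℕ → ℕ))
    (hU : ∀ P ∈ U, IsFilling 2 k P) :
    (PowerSeries.mk fun n => if n = 0 then (1 : Polynomial ℚ) else
        Polynomial.C (((k * n).factorial : ℚ))⁻¹ *
          ∑ᶠ F ∈ {F : ℕ → ℕ → ℕ | IsFilling n k F},
            (Polynomial.X : Polynomial ℚ) ^ mchCount n k U F) *
    (PowerSeries.mk fun n => if n = 0 then (1 : Polynomial ℚ) - Polynomial.X else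
        (Polynomial.X - 1) ^ n *
          Polynomial.C ((fullCount n k U : ℚ) / ((k * n).factorial : ℚ))) =
    PowerSeries.C (R := Polynomial ℚ) (1 - Polynomial.X) := by
  classical
  apply PowerSeries.ext
  intro n
  rw [PowerSeries.coeff_mul]
  by_cases hn : n = 0
  · subst hn
    rw [Finset.Nat.antidiagonal_zero, Finset.sum_singleton]
    simp only [PowerSeries.coeff_mk, PowerSeries.coeff_zero_C]
    simp
  · have hrhs : (PowerSeries.coeff (R := Polynomial ℚ) n)
        (PowerSeries.C (R := Polynomial ℚ) (1 - Polynomial.X)) = 0 := by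
      rw [PowerSeries.coeff_C, if_neg hn]
    rw [hrhs]
    have hn1 : 1 ≤ n := Nat.one_le_iff_ne_zero.mpr hn
    rw [Finset.Nat.sum_antidiagonal_eq_sum_range_succ_mk]
    simp only [PowerSeries.coeff_mk]
    have ha : ∀ i : ℕ, (if i = 0 then (1 : Polynomial ℚ) else
        Polynomial.C (((k * i).factorial : ℚ))⁻¹ *
          ∑ᶠ F ∈ {F : ℕ → ℕ → ℕ | IsFilling i k F},
            (Polynomial.X : Polynomial ℚ) ^ mchCount i k U F)
        = Polynomial.C (((k * i).factorial : ℚ))⁻¹ * HH i k U (Finset.Icc 1 (k * i)) := by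
      intro i
      by_cases hi : i = 0
      · subst hi
        rw [if_pos rfl, show k * 0 = 0 by ring,
          show Finset.Icc 1 0 = (∅ : Finset ℕ) from Finset.Icc_eq_empty (by omega), HH_zero]
        simp
      · rw [if_neg hi]
        congr 1
        have hset : {F : ℕ → ℕ → ℕ | IsFilling i k F}
            = ↑(fillFinset i k (Finset.Icc 1 (k * i))) := by
          ext F
          rw [Set.mem_setOf_eq, Finset.mem_coe, mem_fillFinset, isFilling_iff_fillOn]
        rw [hset, finsum_mem_coe_finset, claimA]
    simp only [ha]
    rw [Finset.sum_range_succ, Nat.sub_self]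
    rw [if_pos rfl]
    have hb : ∀ i ∈ Finset.range n,
        (Polynomial.C (((k * i).factorial : ℚ))⁻¹ * HH i k U (Finset.Icc 1 (k * i))) *
          (if n - i = 0 then (1 : Polynomial ℚ) - Polynomial.X else
            (Polynomial.X - 1) ^ (n - i) *
              Polynomial.C ((fullCount (n - i) k U : ℚ) / ((k * (n - i)).factorial : ℚ)))
        = (Polynomial.C (((k * i).factorial : ℚ))⁻¹ * HH i k U (Finset.Icc 1 (k * i))) *
          ((Polynomial.X - 1) ^ (n - i) *
              Polynomial.C ((fullCount (n - i) k U : ℚ) / ((k * (n - i)).factorial : ℚ))) := by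
      intro i hi
      rw [Finset.mem_range] at hi
      rw [if_neg (by omega)]
    rw [Finset.sum_congr rfl hb, core k U hn1, Finset.mul_sum, Finset.sum_mul,
      ← Finset.sum_add_distrib]
    apply Finset.sum_eq_zero
    intro m hm
    rw [Finset.mem_range] at hm
    rw [← fullCount_eq]
    have hpow : ((X : Polynomial ℚ) - 1) ^ (n - m)
        = (X - 1) ^ (n - 1 - m) * (X - 1) := by
      rw [← pow_succ, show n - 1 - m + 1 = n - m by omega]
    have hC : Polynomial.C (((k * m).factorial : ℚ))⁻¹ *
          Polynomial.C ((fullCount (n - m) k U : ℚ) / ((k * (n - m)).factorial : ℚ))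
        = Polynomial.C (((k * n).factorial : ℚ))⁻¹ *
          Polynomial.C (((k * n).choose (k * m) : ℚ)) *
          Polynomial.C ((fullCount (n - m) k U : ℚ)) := by
      rw [← Polynomial.C_mul, ← Polynomial.C_mul, ← Polynomial.C_mul]
      congr 1
      rw [Nat.cast_choose ℚ (Nat.mul_le_mul_left k (le_of_lt hm)),
        show k * n - k * m = k * (n - m) from (Nat.mul_sub k n m).symm]
      have f1 : ((k * m).factorial : ℚ) ≠ 0 := Nat.cast_ne_zero.mpr (Nat.factorial_ne_zero _)
      have f2 : ((k * n).factorial : ℚ) ≠ 0 := Nat.cast_ne_zero.mpr (Nat.factorial_ne_zero _)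
      have f3 : ((k * (n - m)).factorial : ℚ) ≠ 0 :=
        Nat.cast_ne_zero.mpr (Nat.factorial_ne_zero _)
      field_simp
    rw [← Polynomial.C_eq_natCast, ← Polynomial.C_eq_natCast, hpow]
    linear_combination (HH m k U (Finset.Icc 1 (k * m)) * ((X : Polynomial ℚ) - 1) ^ (n - 1 - m)
      * ((X : Polynomial ℚ) - 1)) * hC
end

section
/- Let k ≥ 1 and let Υ ⊆ F_{2,k}. Let A_{n,k}^Υ denote the number of F ∈ F_{n,k} with no Υ-matches. Then the following identity of formal power series in t over ℚ holds: (1 + Σ_{n≥1} A_{n,k}^Υ t^n/(kn)!) · (1 + Σ_{n≥1} (−1)^n full_n^Υ t^n/(kn)!) = 1. -/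
/-- `A_{n,k}^Υ`: the number of fillings `F ∈ F_{n,k}` with no `Υ`-matches. -/
noncomputable def noMatchCount (n k : ℕ) (U : Set (ℕ → ℕ → ℕ)) : ℕ :=
  Nat.card {F : ℕ → ℕ → ℕ // IsFilling n k F ∧
    ∀ i, 1 ≤ i → i ≤ n - 1 → ¬ ∃ P ∈ U, MatchAt 2 k P F i}


section Aux


/-- rank of `x` in finite set `S` (1-indexed). -/
def stdR (S : Finset ℕ) (x : ℕ) : ℕ := (S.filter (fun s => s ≤ x)).card

noncomputable def invStd (S : Finset ℕ) (i : ℕ) : ℕ := Function.invFunOn (stdR S) ↑S i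

lemma stdR_lt_stdR {S : Finset ℕ} {x y : ℕ} (hy : y ∈ S) (hxy : x < y) :
    stdR S x < stdR S y := by
  apply Finset.card_lt_card
  constructor
  · intro s hs
    simp only [Finset.mem_filter] at hs ⊢
    exact ⟨hs.1, hs.2.trans hxy.le⟩
  · intro hsub
    have := hsub (Finset.mem_filter.2 ⟨hy, le_refl y⟩)
    simp only [Finset.mem_filter] at this
    exact absurd this.2 (not_le.2 hxy)

lemma stdR_lt_iff {S : Finset ℕ} {x y : ℕ} (hx : x ∈ S) (hy : y ∈ S) :
    stdR S x < stdR S y ↔ x < y := by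
  constructor
  · intro h
    by_contra hle
    push_neg at hle
    rcases hle.lt_or_eq with h' | h'
    · exact absurd (stdR_lt_stdR hx h') (by omega)
    · subst h'
      exact lt_irrefl _ h
  · exact stdR_lt_stdR hy

lemma stdR_inj {S : Finset ℕ} {x y : ℕ} (hx : x ∈ S) (hy : y ∈ S)
    (h : stdR S x = stdR S y) : x = y := by
  rcases lt_trichotomy x y with h' | h' | h'
  · exact absurd (stdR_lt_stdR hy h') (by omega)
  · exact h'
  · exact absurd (stdR_lt_stdR hx h') (by omega)

lemma stdR_mem {S : Finset ℕ} {x : ℕ} (hx : x ∈ S) :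
    stdR S x ∈ Finset.Icc 1 S.card := by
  simp only [Finset.mem_Icc]
  constructor
  · have hm : x ∈ S.filter (fun s => s ≤ x) := Finset.mem_filter.2 ⟨hx, le_refl x⟩
    exact Finset.card_pos.2 ⟨x, hm⟩
  · exact Finset.card_le_card (Finset.filter_subset _ _)

lemma stdR_image (S : Finset ℕ) : S.image (stdR S) = Finset.Icc 1 S.card := by
  apply Finset.eq_of_subset_of_card_le
  · intro i hi
    rcases Finset.mem_image.1 hi with ⟨x, hx, rfl⟩
    exact stdR_mem hx
  · rw [Nat.card_Icc, Finset.card_image_of_injOn]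
    · omega
    · intro x hx y hy h
      exact stdR_inj hx hy h

lemma stdR_surj {S : Finset ℕ} {i : ℕ} (hi : i ∈ Finset.Icc 1 S.card) :
    ∃ x ∈ S, stdR S x = i := by
  rw [← stdR_image] at hi
  rcases Finset.mem_image.1 hi with ⟨x, hx, rfl⟩
  exact ⟨x, hx, rfl⟩

lemma invStd_spec {S : Finset ℕ} {i : ℕ} (hi : i ∈ Finset.Icc 1 S.card) :
    invStd S i ∈ S ∧ stdR S (invStd S i) = i := by
  rcases stdR_surj hi with ⟨x, hx, hxi⟩
  have hex : ∃ a ∈ (↑S : Set ℕ), stdR S a = i := ⟨x, hx, hxi⟩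
  exact ⟨Function.invFunOn_mem hex, Function.invFunOn_eq hex⟩

lemma invStd_mem {S : Finset ℕ} {i : ℕ} (hi : i ∈ Finset.Icc 1 S.card) :
    invStd S i ∈ S := (invStd_spec hi).1

lemma stdR_invStd {S : Finset ℕ} {i : ℕ} (hi : i ∈ Finset.Icc 1 S.card) :
    stdR S (invStd S i) = i := (invStd_spec hi).2

lemma invStd_stdR {S : Finset ℕ} {x : ℕ} (hx : x ∈ S) :
    invStd S (stdR S x) = x := by
  have h := invStd_spec (stdR_mem hx)
  exact stdR_inj h.1 hx h.2

lemma invStd_lt_iff {S : Finset ℕ} {i i' : ℕ} (hi : i ∈ Finset.Icc 1 S.card)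
    (hi' : i' ∈ Finset.Icc 1 S.card) :
    invStd S i < invStd S i' ↔ i < i' := by
  rw [← stdR_lt_iff (invStd_mem hi) (invStd_mem hi'), stdR_invStd hi, stdR_invStd hi']

lemma fillings_finite (n k : ℕ) (p : (ℕ → ℕ → ℕ) → Prop) :
    Finite {F : ℕ → ℕ → ℕ // IsFilling n k F ∧ p F} := by
  have hbd : ∀ (F : ℕ → ℕ → ℕ), IsFilling n k F → ∀ i j, F i j < k * n + 1 := by
    intro F hF i j
    by_cases h : F i j = 0
    · omega
    · rcases hF.1 i j h with ⟨h1, h2, h3, h4⟩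
      have hm := hF.2.1.1 (show ((i, j) : ℕ × ℕ) ∈ Set.Icc 1 k ×ˢ Set.Icc 1 n from
        ⟨⟨h1, h2⟩, ⟨h3, h4⟩⟩)
      have : F i j ≤ k * n := hm.2
      omega
  apply Finite.of_injective (fun F : {F : ℕ → ℕ → ℕ // IsFilling n k F ∧ p F} =>
    (fun q : Fin (k + 1) × Fin (n + 1) =>
      (⟨F.1 q.1 q.2, hbd F.1 F.2.1 q.1 q.2⟩ : Fin (k * n + 1))))
  intro F G h
  apply Subtype.ext
  funext i j
  by_cases hb : 1 ≤ i ∧ i ≤ k ∧ 1 ≤ j ∧ j ≤ n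
  · have := congrFun h (⟨i, by omega⟩, ⟨j, by omega⟩)
    simpa using congrArg Fin.val this
  · have h1 : F.1 i j = 0 := by
      by_contra hne; exact hb (F.2.1.1 i j hne)
    have h2 : G.1 i j = 0 := by
      by_contra hne; exact hb (G.2.1.1 i j hne)
    rw [h1, h2]

lemma isFilling_block (w k : ℕ) (T : Finset ℕ) (f : ℕ → ℕ → ℕ)
    (hcard : T.card = k * w)
    (hmem : ∀ a b, 1 ≤ a → a ≤ k → 1 ≤ b → b ≤ w → f a b ∈ T)
    (hinj : ∀ a b c d, 1 ≤ a → a ≤ k → 1 ≤ b → b ≤ w → 1 ≤ c → c ≤ k → 1 ≤ d → d ≤ w →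
      f a b = f c d → a = c ∧ b = d)
    (hcol : ∀ a b, 1 ≤ a → a < k → 1 ≤ b → b ≤ w → f a b < f (a + 1) b) :
    IsFilling w k (fun a b => if 1 ≤ a ∧ a ≤ k ∧ 1 ≤ b ∧ b ≤ w then stdR T (f a b) else 0) := by
  have himg : (Finset.Icc 1 k ×ˢ Finset.Icc 1 w).image (fun p : ℕ × ℕ => f p.1 p.2) = T := by
    apply Finset.eq_of_subset_of_card_le
    · intro y hy
      rcases Finset.mem_image.1 hy with ⟨q, hq, rfl⟩
      simp only [Finset.mem_product, Finset.mem_Icc] at hq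
      exact hmem _ _ hq.1.1 hq.1.2 hq.2.1 hq.2.2
    · rw [hcard, Finset.card_image_of_injOn, Finset.card_product, Nat.card_Icc, Nat.card_Icc]
      · simp
      · intro q hq r hr hqr
        simp only [Finset.coe_product, Set.mem_prod, Finset.mem_coe, Finset.mem_Icc] at hq hr
        have := hinj q.1 q.2 r.1 r.2 hq.1.1 hq.1.2 hq.2.1 hq.2.2 hr.1.1 hr.1.2 hr.2.1 hr.2.2 hqr
        exact Prod.ext this.1 this.2
  refine ⟨?_, ⟨?_, ?_, ?_⟩, ?_⟩
  · intro i j h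
    by_cases hc : 1 ≤ i ∧ i ≤ k ∧ 1 ≤ j ∧ j ≤ w
    · exact hc
    · simp only [if_neg hc] at h
      exact absurd rfl h
  · intro q hq
    simp only [Set.mem_prod, Set.mem_Icc] at hq
    simp only [if_pos (show 1 ≤ q.1 ∧ q.1 ≤ k ∧ 1 ≤ q.2 ∧ q.2 ≤ w from
      ⟨hq.1.1, hq.1.2, hq.2.1, hq.2.2⟩)]
    have := stdR_mem (hmem q.1 q.2 hq.1.1 hq.1.2 hq.2.1 hq.2.2)
    rw [hcard] at this
    simp only [Finset.mem_Icc] at this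
    exact ⟨this.1, this.2⟩
  · intro q hq r hr hqr
    simp only [Set.mem_prod, Set.mem_Icc] at hq hr
    simp only [if_pos (show 1 ≤ q.1 ∧ q.1 ≤ k ∧ 1 ≤ q.2 ∧ q.2 ≤ w from
      ⟨hq.1.1, hq.1.2, hq.2.1, hq.2.2⟩),
      if_pos (show 1 ≤ r.1 ∧ r.1 ≤ k ∧ 1 ≤ r.2 ∧ r.2 ≤ w from
      ⟨hr.1.1, hr.1.2, hr.2.1, hr.2.2⟩)] at hqr
    have hfq := hmem q.1 q.2 hq.1.1 hq.1.2 hq.2.1 hq.2.2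
    have hfr := hmem r.1 r.2 hr.1.1 hr.1.2 hr.2.1 hr.2.2
    have := hinj q.1 q.2 r.1 r.2 hq.1.1 hq.1.2 hq.2.1 hq.2.2 hr.1.1 hr.1.2 hr.2.1 hr.2.2
      (stdR_inj hfq hfr hqr)
    exact Prod.ext this.1 this.2
  · intro y hy
    simp only [Set.mem_Icc] at hy
    have hy' : y ∈ Finset.Icc 1 T.card := by rw [hcard]; exact Finset.mem_Icc.2 hy
    rcases stdR_surj hy' with ⟨x, hx, hxy⟩
    rw [← himg] at hx
    rcases Finset.mem_image.1 hx with ⟨q, hq, rfl⟩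
    simp only [Finset.mem_product, Finset.mem_Icc] at hq
    refine ⟨q, ⟨⟨hq.1.1, hq.1.2⟩, ⟨hq.2.1, hq.2.2⟩⟩, ?_⟩
    simpa only [if_pos (show 1 ≤ q.1 ∧ q.1 ≤ k ∧ 1 ≤ q.2 ∧ q.2 ≤ w from
      ⟨hq.1.1, hq.1.2, hq.2.1, hq.2.2⟩)] using hxy
  · intro i j h1 h2 h3 h4
    simp only [if_pos (show 1 ≤ i ∧ i ≤ k ∧ 1 ≤ j ∧ j ≤ w from ⟨h1, by omega, h3, h4⟩),
      if_pos (show 1 ≤ i + 1 ∧ i + 1 ≤ k ∧ 1 ≤ j ∧ j ≤ w from ⟨by omega, by omega, h3, h4⟩)]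
    exact stdR_lt_stdR (hmem (i + 1) j (by omega) (by omega) h3 h4) (hcol i j h1 h2 h3 h4)

lemma isFilling_glue (n k j : ℕ) (hj : j ≤ n) (S : Finset ℕ)
    (hS : S ⊆ Finset.Icc 1 (k * n)) (hscard : S.card = k * j)
    (f g : ℕ → ℕ → ℕ)
    (hfmem : ∀ a b, 1 ≤ a → a ≤ k → 1 ≤ b → b ≤ j → f a b ∈ S)
    (hgmem : ∀ a b, 1 ≤ a → a ≤ k → 1 ≤ b → b ≤ n - j →
      g a b ∈ Finset.Icc 1 (k * n) \ S)
    (hfinj : ∀ a b c d, 1 ≤ a → a ≤ k → 1 ≤ b → b ≤ j → 1 ≤ c → c ≤ k → 1 ≤ d → d ≤ j →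
      f a b = f c d → a = c ∧ b = d)
    (hginj : ∀ a b c d, 1 ≤ a → a ≤ k → 1 ≤ b → b ≤ n - j → 1 ≤ c → c ≤ k → 1 ≤ d →
      d ≤ n - j → g a b = g c d → a = c ∧ b = d)
    (hfcol : ∀ a b, 1 ≤ a → a < k → 1 ≤ b → b ≤ j → f a b < f (a + 1) b)
    (hgcol : ∀ a b, 1 ≤ a → a < k → 1 ≤ b → b ≤ n - j → g a b < g (a + 1) b) :
    IsFilling n k (fun a b => if 1 ≤ a ∧ a ≤ k ∧ 1 ≤ b ∧ b ≤ j then f a b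
      else if 1 ≤ a ∧ a ≤ k ∧ j + 1 ≤ b ∧ b ≤ n then g a (b - j) else 0) := by
  have hmulsub : k * (n - j) + k * j = k * n := by
    rw [← Nat.mul_add]
    congr 1
    omega
  have hTcard : (Finset.Icc 1 (k * n) \ S).card = k * (n - j) := by
    rw [Finset.card_sdiff_of_subset hS, Nat.card_Icc, hscard]
    omega
  have himgf : (Finset.Icc 1 k ×ˢ Finset.Icc 1 j).image (fun p : ℕ × ℕ => f p.1 p.2) = S := by
    apply Finset.eq_of_subset_of_card_le
    · intro y hy
      rcases Finset.mem_image.1 hy with ⟨q, hq, rfl⟩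
      simp only [Finset.mem_product, Finset.mem_Icc] at hq
      exact hfmem _ _ hq.1.1 hq.1.2 hq.2.1 hq.2.2
    · rw [hscard, Finset.card_image_of_injOn, Finset.card_product, Nat.card_Icc, Nat.card_Icc]
      · simp
      · intro q hq r hr hqr
        simp only [Finset.coe_product, Set.mem_prod, Finset.mem_coe, Finset.mem_Icc] at hq hr
        have := hfinj q.1 q.2 r.1 r.2 hq.1.1 hq.1.2 hq.2.1 hq.2.2 hr.1.1 hr.1.2 hr.2.1 hr.2.2 hqr
        exact Prod.ext this.1 this.2
  have himgg : (Finset.Icc 1 k ×ˢ Finset.Icc 1 (n - j)).image (fun p : ℕ × ℕ => g p.1 p.2)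
      = Finset.Icc 1 (k * n) \ S := by
    apply Finset.eq_of_subset_of_card_le
    · intro y hy
      rcases Finset.mem_image.1 hy with ⟨q, hq, rfl⟩
      simp only [Finset.mem_product, Finset.mem_Icc] at hq
      exact hgmem _ _ hq.1.1 hq.1.2 hq.2.1 hq.2.2
    · rw [hTcard, Finset.card_image_of_injOn, Finset.card_product, Nat.card_Icc, Nat.card_Icc]
      · simp
      · intro q hq r hr hqr
        simp only [Finset.coe_product, Set.mem_prod, Finset.mem_coe, Finset.mem_Icc] at hq hr
        have := hginj q.1 q.2 r.1 r.2 hq.1.1 hq.1.2 hq.2.1 hq.2.2 hr.1.1 hr.1.2 hr.2.1 hr.2.2 hqr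
        exact Prod.ext this.1 this.2
  refine ⟨?_, ⟨?_, ?_, ?_⟩, ?_⟩
  · intro a b h
    by_cases hc : 1 ≤ a ∧ a ≤ k ∧ 1 ≤ b ∧ b ≤ j
    · exact ⟨hc.1, hc.2.1, hc.2.2.1, by omega⟩
    · by_cases hc' : 1 ≤ a ∧ a ≤ k ∧ j + 1 ≤ b ∧ b ≤ n
      · exact ⟨hc'.1, hc'.2.1, by omega, hc'.2.2.2⟩
      · simp only [if_neg hc, if_neg hc'] at h
        exact absurd rfl h
  · -- MapsTo
    intro q hq
    simp only [Set.mem_prod, Set.mem_Icc] at hq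
    by_cases hb : q.2 ≤ j
    · simp only [if_pos (show 1 ≤ q.1 ∧ q.1 ≤ k ∧ 1 ≤ q.2 ∧ q.2 ≤ j from
        ⟨hq.1.1, hq.1.2, hq.2.1, hb⟩)]
      have := hS (hfmem q.1 q.2 hq.1.1 hq.1.2 hq.2.1 hb)
      simpa only [Finset.mem_Icc, Set.mem_Icc] using this
    · have hcond : ¬(1 ≤ q.1 ∧ q.1 ≤ k ∧ 1 ≤ q.2 ∧ q.2 ≤ j) := by
        intro hcc; exact hb hcc.2.2.2
      simp only [if_neg hcond, if_pos (show 1 ≤ q.1 ∧ q.1 ≤ k ∧ j + 1 ≤ q.2 ∧ q.2 ≤ n from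
        ⟨hq.1.1, hq.1.2, by omega, hq.2.2⟩)]
      have := hgmem q.1 (q.2 - j) hq.1.1 hq.1.2 (by omega) (by omega)
      simp only [Finset.mem_sdiff, Finset.mem_Icc] at this
      exact Set.mem_Icc.2 this.1
  · -- InjOn
    intro q hq r hr hqr
    simp only [Set.mem_prod, Set.mem_Icc] at hq hr
    by_cases hbq : q.2 ≤ j <;> by_cases hbr : r.2 ≤ j
    · simp only [if_pos (show 1 ≤ q.1 ∧ q.1 ≤ k ∧ 1 ≤ q.2 ∧ q.2 ≤ j from
        ⟨hq.1.1, hq.1.2, hq.2.1, hbq⟩),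
        if_pos (show 1 ≤ r.1 ∧ r.1 ≤ k ∧ 1 ≤ r.2 ∧ r.2 ≤ j from
        ⟨hr.1.1, hr.1.2, hr.2.1, hbr⟩)] at hqr
      have := hfinj q.1 q.2 r.1 r.2 hq.1.1 hq.1.2 hq.2.1 hbq hr.1.1 hr.1.2 hr.2.1 hbr hqr
      exact Prod.ext this.1 this.2
    · exfalso
      have hcr : ¬(1 ≤ r.1 ∧ r.1 ≤ k ∧ 1 ≤ r.2 ∧ r.2 ≤ j) := fun hcc => hbr hcc.2.2.2
      simp only [if_pos (show 1 ≤ q.1 ∧ q.1 ≤ k ∧ 1 ≤ q.2 ∧ q.2 ≤ j from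
        ⟨hq.1.1, hq.1.2, hq.2.1, hbq⟩), if_neg hcr,
        if_pos (show 1 ≤ r.1 ∧ r.1 ≤ k ∧ j + 1 ≤ r.2 ∧ r.2 ≤ n from
        ⟨hr.1.1, hr.1.2, by omega, hr.2.2⟩)] at hqr
      have h1 := hfmem q.1 q.2 hq.1.1 hq.1.2 hq.2.1 hbq
      have h2 := hgmem r.1 (r.2 - j) hr.1.1 hr.1.2 (by omega) (by omega)
      rw [hqr] at h1
      exact (Finset.mem_sdiff.1 h2).2 h1
    · exfalso
      have hcq : ¬(1 ≤ q.1 ∧ q.1 ≤ k ∧ 1 ≤ q.2 ∧ q.2 ≤ j) := fun hcc => hbq hcc.2.2.2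
      simp only [if_neg hcq, if_pos (show 1 ≤ q.1 ∧ q.1 ≤ k ∧ j + 1 ≤ q.2 ∧ q.2 ≤ n from
        ⟨hq.1.1, hq.1.2, by omega, hq.2.2⟩),
        if_pos (show 1 ≤ r.1 ∧ r.1 ≤ k ∧ 1 ≤ r.2 ∧ r.2 ≤ j from
        ⟨hr.1.1, hr.1.2, hr.2.1, hbr⟩)] at hqr
      have h1 := hfmem r.1 r.2 hr.1.1 hr.1.2 hr.2.1 hbr
      have h2 := hgmem q.1 (q.2 - j) hq.1.1 hq.1.2 (by omega) (by omega)
      rw [← hqr] at h1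
      exact (Finset.mem_sdiff.1 h2).2 h1
    · have hcq : ¬(1 ≤ q.1 ∧ q.1 ≤ k ∧ 1 ≤ q.2 ∧ q.2 ≤ j) := fun hcc => hbq hcc.2.2.2
      have hcr : ¬(1 ≤ r.1 ∧ r.1 ≤ k ∧ 1 ≤ r.2 ∧ r.2 ≤ j) := fun hcc => hbr hcc.2.2.2
      simp only [if_neg hcq, if_neg hcr,
        if_pos (show 1 ≤ q.1 ∧ q.1 ≤ k ∧ j + 1 ≤ q.2 ∧ q.2 ≤ n from
        ⟨hq.1.1, hq.1.2, by omega, hq.2.2⟩),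
        if_pos (show 1 ≤ r.1 ∧ r.1 ≤ k ∧ j + 1 ≤ r.2 ∧ r.2 ≤ n from
        ⟨hr.1.1, hr.1.2, by omega, hr.2.2⟩)] at hqr
      have := hginj q.1 (q.2 - j) r.1 (r.2 - j) hq.1.1 hq.1.2 (by omega) (by omega)
        hr.1.1 hr.1.2 (by omega) (by omega) hqr
      have h2 : q.2 = r.2 := by omega
      exact Prod.ext this.1 h2
  · -- SurjOn
    intro y hy
    simp only [Set.mem_Icc] at hy
    by_cases hyS : y ∈ S
    · rw [← himgf] at hyS
      rcases Finset.mem_image.1 hyS with ⟨q, hq, rfl⟩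
      simp only [Finset.mem_product, Finset.mem_Icc] at hq
      refine ⟨(q.1, q.2), ⟨⟨hq.1.1, hq.1.2⟩, ⟨hq.2.1, by omega⟩⟩, ?_⟩
      simp only [if_pos (show 1 ≤ q.1 ∧ q.1 ≤ k ∧ 1 ≤ q.2 ∧ q.2 ≤ j from
        ⟨hq.1.1, hq.1.2, hq.2.1, hq.2.2⟩)]
    · have hyT : y ∈ Finset.Icc 1 (k * n) \ S :=
        Finset.mem_sdiff.2 ⟨Finset.mem_Icc.2 hy, hyS⟩
      rw [← himgg] at hyT
      rcases Finset.mem_image.1 hyT with ⟨q, hq, rfl⟩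
      simp only [Finset.mem_product, Finset.mem_Icc] at hq
      refine ⟨(q.1, j + q.2), ⟨⟨hq.1.1, hq.1.2⟩, ⟨by omega, by omega⟩⟩, ?_⟩
      have hcq : ¬(1 ≤ q.1 ∧ q.1 ≤ k ∧ 1 ≤ j + q.2 ∧ j + q.2 ≤ j) := by
        intro hcc; omega
      simp only [if_neg hcq, if_pos (show 1 ≤ q.1 ∧ q.1 ≤ k ∧ j + 1 ≤ j + q.2 ∧ j + q.2 ≤ n from
        ⟨hq.1.1, hq.1.2, by omega, by omega⟩)]
      congr 1
      omega
  · -- column increase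
    intro a b h1 h2 h3 h4
    by_cases hb : b ≤ j
    · simp only [if_pos (show 1 ≤ a ∧ a ≤ k ∧ 1 ≤ b ∧ b ≤ j from ⟨h1, by omega, h3, hb⟩),
        if_pos (show 1 ≤ a + 1 ∧ a + 1 ≤ k ∧ 1 ≤ b ∧ b ≤ j from ⟨by omega, by omega, h3, hb⟩)]
      exact hfcol a b h1 h2 h3 hb
    · have hc1 : ¬(1 ≤ a ∧ a ≤ k ∧ 1 ≤ b ∧ b ≤ j) := fun hcc => hb hcc.2.2.2
      have hc2 : ¬(1 ≤ a + 1 ∧ a + 1 ≤ k ∧ 1 ≤ b ∧ b ≤ j) := fun hcc => hb hcc.2.2.2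
      simp only [if_neg hc1, if_neg hc2,
        if_pos (show 1 ≤ a ∧ a ≤ k ∧ j + 1 ≤ b ∧ b ≤ n from ⟨h1, by omega, by omega, h4⟩),
        if_pos (show 1 ≤ a + 1 ∧ a + 1 ≤ k ∧ j + 1 ≤ b ∧ b ≤ n from
        ⟨by omega, by omega, by omega, h4⟩)]
      exact hgcol a (b - j) h1 h2 (by omega) (by omega)

lemma matchAt_iff (k i i' : ℕ) (F F' : ℕ → ℕ → ℕ)
    (h : ∀ a b c d, 1 ≤ a → a ≤ k → 1 ≤ b → b ≤ 2 → 1 ≤ c → c ≤ k → 1 ≤ d → d ≤ 2 →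
      (F a (i - 1 + b) < F c (i - 1 + d) ↔ F' a (i' - 1 + b) < F' c (i' - 1 + d)))
    (P : ℕ → ℕ → ℕ) : MatchAt 2 k P F i ↔ MatchAt 2 k P F' i' := by
  constructor <;> intro hm a b c d h1 h2 h3 h4 h5 h6 h7 h8
  · rw [← h a b c d h1 h2 h3 h4 h5 h6 h7 h8]
    exact hm a b c d h1 h2 h3 h4 h5 h6 h7 h8
  · rw [h a b c d h1 h2 h3 h4 h5 h6 h7 h8]
    exact hm a b c d h1 h2 h3 h4 h5 h6 h7 h8

def colsSet (k j : ℕ) (F : ℕ → ℕ → ℕ) : Finset ℕ :=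
  (Finset.Icc 1 k ×ˢ Finset.Icc 1 j).image (fun p : ℕ × ℕ => F p.1 p.2)

def Gof (k j : ℕ) (F : ℕ → ℕ → ℕ) : ℕ → ℕ → ℕ := fun a b =>
  if 1 ≤ a ∧ a ≤ k ∧ 1 ≤ b ∧ b ≤ j then stdR (colsSet k j F) (F a b) else 0

def Hof (n k j : ℕ) (F : ℕ → ℕ → ℕ) : ℕ → ℕ → ℕ := fun a b =>
  if 1 ≤ a ∧ a ≤ k ∧ 1 ≤ b ∧ b ≤ n - j then
    stdR (Finset.Icc 1 (k * n) \ colsSet k j F) (F a (j + b)) else 0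

noncomputable def Fof (n k j : ℕ) (S : Finset ℕ) (G H : ℕ → ℕ → ℕ) : ℕ → ℕ → ℕ := fun a b =>
  if 1 ≤ a ∧ a ≤ k ∧ 1 ≤ b ∧ b ≤ j then invStd S (G a b)
  else if 1 ≤ a ∧ a ≤ k ∧ j + 1 ≤ b ∧ b ≤ n then
    invStd (Finset.Icc 1 (k * n) \ S) (H a (b - j)) else 0

section Forward

variable {n k j : ℕ} {F : ℕ → ℕ → ℕ}

lemma mem_colsSet {a b : ℕ} (h1 : 1 ≤ a) (h2 : a ≤ k) (h3 : 1 ≤ b) (h4 : b ≤ j) :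
    F a b ∈ colsSet k j F :=
  Finset.mem_image.2 ⟨(a, b), Finset.mem_product.2
    ⟨Finset.mem_Icc.2 ⟨h1, h2⟩, Finset.mem_Icc.2 ⟨h3, h4⟩⟩, rfl⟩

lemma F_mem_Icc (hF : IsFilling n k F) {a b : ℕ}
    (h1 : 1 ≤ a) (h2 : a ≤ k) (h3 : 1 ≤ b) (h4 : b ≤ n) :
    F a b ∈ Finset.Icc 1 (k * n) := by
  have := hF.2.1.1 (show ((a, b) : ℕ × ℕ) ∈ Set.Icc 1 k ×ˢ Set.Icc 1 n from
    ⟨⟨h1, h2⟩, ⟨h3, h4⟩⟩)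
  exact Finset.mem_Icc.2 this

lemma F_injOn (hF : IsFilling n k F) {a b c d : ℕ}
    (h1 : 1 ≤ a) (h2 : a ≤ k) (h3 : 1 ≤ b) (h4 : b ≤ n)
    (h5 : 1 ≤ c) (h6 : c ≤ k) (h7 : 1 ≤ d) (h8 : d ≤ n)
    (h : F a b = F c d) : a = c ∧ b = d := by
  have := hF.2.1.2.1 (show ((a, b) : ℕ × ℕ) ∈ Set.Icc 1 k ×ˢ Set.Icc 1 n from
    ⟨⟨h1, h2⟩, ⟨h3, h4⟩⟩) (show ((c, d) : ℕ × ℕ) ∈ Set.Icc 1 k ×ˢ Set.Icc 1 n from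
    ⟨⟨h5, h6⟩, ⟨h7, h8⟩⟩) h
  exact ⟨congrArg Prod.fst this, congrArg Prod.snd this⟩

lemma colsSet_subset (hj : j ≤ n) (hF : IsFilling n k F) :
    colsSet k j F ⊆ Finset.Icc 1 (k * n) := by
  intro y hy
  rcases Finset.mem_image.1 hy with ⟨q, hq, rfl⟩
  simp only [Finset.mem_product, Finset.mem_Icc] at hq
  exact F_mem_Icc hF hq.1.1 hq.1.2 hq.2.1 (by omega)

lemma colsSet_card (hj : j ≤ n) (hF : IsFilling n k F) : (colsSet k j F).card = k * j := by
  rw [colsSet, Finset.card_image_of_injOn, Finset.card_product, Nat.card_Icc, Nat.card_Icc]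
  · simp
  · intro q hq r hr hqr
    simp only [Finset.coe_product, Set.mem_prod, Finset.mem_coe, Finset.mem_Icc] at hq hr
    have := F_injOn hF hq.1.1 hq.1.2 hq.2.1 (by omega) hr.1.1 hr.1.2 hr.2.1 (by omega) hqr
    exact Prod.ext this.1 this.2

lemma not_mem_colsSet (hj : j ≤ n) (hF : IsFilling n k F) {a b : ℕ}
    (h1 : 1 ≤ a) (h2 : a ≤ k) (h3 : j + 1 ≤ b) (h4 : b ≤ n) :
    F a b ∉ colsSet k j F := by
  intro hy
  rcases Finset.mem_image.1 hy with ⟨q, hq, hqe⟩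
  simp only [Finset.mem_product, Finset.mem_Icc] at hq
  have := F_injOn hF hq.1.1 hq.1.2 hq.2.1 (by omega) h1 h2 (by omega) h4 hqe
  omega

lemma Tcard (hj : j ≤ n) (hF : IsFilling n k F) :
    (Finset.Icc 1 (k * n) \ colsSet k j F).card = k * (n - j) := by
  rw [Finset.card_sdiff_of_subset (colsSet_subset hj hF), Nat.card_Icc, colsSet_card hj hF]
  have h : k * (n - j) + k * j = k * n := by rw [← Nat.mul_add]; congr 1; omega
  omega

lemma F_mem_T (hj : j ≤ n) (hF : IsFilling n k F) {a b : ℕ}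
    (h1 : 1 ≤ a) (h2 : a ≤ k) (h3 : j + 1 ≤ b) (h4 : b ≤ n) :
    F a b ∈ Finset.Icc 1 (k * n) \ colsSet k j F :=
  Finset.mem_sdiff.2 ⟨F_mem_Icc hF h1 h2 (by omega) h4, not_mem_colsSet hj hF h1 h2 h3 h4⟩

lemma Gof_isFilling (hj : j ≤ n) (hF : IsFilling n k F) : IsFilling j k (Gof k j F) := by
  exact isFilling_block j k (colsSet k j F) F (colsSet_card hj hF)
    (fun a b h1 h2 h3 h4 => mem_colsSet h1 h2 h3 h4)
    (fun a b c d h1 h2 h3 h4 h5 h6 h7 h8 h =>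
      F_injOn hF h1 h2 h3 (by omega) h5 h6 h7 (by omega) h)
    (fun a b h1 h2 h3 h4 => hF.2.2 a b h1 h2 h3 (by omega))

lemma Hof_isFilling (hj : j ≤ n) (hF : IsFilling n k F) :
    IsFilling (n - j) k (Hof n k j F) := by
  exact isFilling_block (n - j) k (Finset.Icc 1 (k * n) \ colsSet k j F)
    (fun a b => F a (j + b)) (Tcard hj hF)
    (fun a b h1 h2 h3 h4 => F_mem_T hj hF h1 h2 (by omega) (by omega))
    (fun a b c d h1 h2 h3 h4 h5 h6 h7 h8 h => by
      have := F_injOn hF h1 h2 (show 1 ≤ j + b by omega) (by omega) h5 h6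
        (show 1 ≤ j + d by omega) (by omega) h
      exact ⟨this.1, by omega⟩)
    (fun a b h1 h2 h3 h4 => hF.2.2 a (j + b) h1 h2 (by omega) (by omega))

lemma Gof_hasM (U : Set (ℕ → ℕ → ℕ)) (hj : j ≤ n) (hF : IsFilling n k F) {i : ℕ}
    (hi1 : 1 ≤ i) (hi2 : i ≤ j - 1) :
    (∃ P ∈ U, MatchAt 2 k P F i) ↔ (∃ P ∈ U, MatchAt 2 k P (Gof k j F) i) := by
  refine exists_congr fun P => and_congr_right fun _ => matchAt_iff k i i F (Gof k j F) ?_ P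
  intro a b c d h1 h2 h3 h4 h5 h6 h7 h8
  have e1 : Gof k j F a (i - 1 + b) = stdR (colsSet k j F) (F a (i - 1 + b)) :=
    if_pos ⟨h1, h2, by omega, by omega⟩
  have e2 : Gof k j F c (i - 1 + d) = stdR (colsSet k j F) (F c (i - 1 + d)) :=
    if_pos ⟨h5, h6, by omega, by omega⟩
  rw [e1, e2, stdR_lt_iff (mem_colsSet h1 h2 (by omega) (by omega))
    (mem_colsSet h5 h6 (by omega) (by omega))]

lemma Hof_hasM (U : Set (ℕ → ℕ → ℕ)) (hj : j ≤ n) (hF : IsFilling n k F) {i : ℕ}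
    (hi1 : j + 1 ≤ i) (hi2 : i ≤ n - 1) :
    (∃ P ∈ U, MatchAt 2 k P F i) ↔ (∃ P ∈ U, MatchAt 2 k P (Hof n k j F) (i - j)) := by
  refine exists_congr fun P => and_congr_right fun _ =>
    matchAt_iff k i (i - j) F (Hof n k j F) ?_ P
  intro a b c d h1 h2 h3 h4 h5 h6 h7 h8
  have e1 : Hof n k j F a (i - j - 1 + b)
      = stdR (Finset.Icc 1 (k * n) \ colsSet k j F) (F a (j + (i - j - 1 + b))) :=
    if_pos ⟨h1, h2, by omega, by omega⟩
  have e2 : Hof n k j F c (i - j - 1 + d)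
      = stdR (Finset.Icc 1 (k * n) \ colsSet k j F) (F c (j + (i - j - 1 + d))) :=
    if_pos ⟨h5, h6, by omega, by omega⟩
  have eb : j + (i - j - 1 + b) = i - 1 + b := by omega
  have ed : j + (i - j - 1 + d) = i - 1 + d := by omega
  rw [e1, e2, eb, ed, stdR_lt_iff (F_mem_T hj hF h1 h2 (by omega) (by omega))
    (F_mem_T hj hF h5 h6 (by omega) (by omega))]

end Forward

section Backward

variable {n k j : ℕ} {S : Finset ℕ} {G H : ℕ → ℕ → ℕ}

lemma G_mem (hScard : S.card = k * j) (hG : IsFilling j k G) {a b : ℕ}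
    (h1 : 1 ≤ a) (h2 : a ≤ k) (h3 : 1 ≤ b) (h4 : b ≤ j) :
    G a b ∈ Finset.Icc 1 S.card := by
  rw [hScard]
  have := hG.2.1.1 (show ((a, b) : ℕ × ℕ) ∈ Set.Icc 1 k ×ˢ Set.Icc 1 j from
    ⟨⟨h1, h2⟩, ⟨h3, h4⟩⟩)
  exact Finset.mem_Icc.2 this

lemma H_mem (hS : S ⊆ Finset.Icc 1 (k * n)) (hScard : S.card = k * j) (hj : j ≤ n)
    (hH : IsFilling (n - j) k H) {a b : ℕ}
    (h1 : 1 ≤ a) (h2 : a ≤ k) (h3 : 1 ≤ b) (h4 : b ≤ n - j) :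
    H a b ∈ Finset.Icc 1 (Finset.Icc 1 (k * n) \ S).card := by
  rw [Finset.card_sdiff_of_subset hS, Nat.card_Icc, hScard]
  have hm : k * (n - j) + k * j = k * n := by rw [← Nat.mul_add]; congr 1; omega
  have := hH.2.1.1 (show ((a, b) : ℕ × ℕ) ∈ Set.Icc 1 k ×ˢ Set.Icc 1 (n - j) from
    ⟨⟨h1, h2⟩, ⟨h3, h4⟩⟩)
  have h' : 1 ≤ H a b ∧ H a b ≤ k * (n - j) := this
  exact Finset.mem_Icc.2 ⟨h'.1, by omega⟩

lemma G_injOn (hG : IsFilling j k G) {a b c d : ℕ}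
    (h1 : 1 ≤ a) (h2 : a ≤ k) (h3 : 1 ≤ b) (h4 : b ≤ j)
    (h5 : 1 ≤ c) (h6 : c ≤ k) (h7 : 1 ≤ d) (h8 : d ≤ j)
    (h : G a b = G c d) : a = c ∧ b = d := by
  have := hG.2.1.2.1 (show ((a, b) : ℕ × ℕ) ∈ Set.Icc 1 k ×ˢ Set.Icc 1 j from
    ⟨⟨h1, h2⟩, ⟨h3, h4⟩⟩) (show ((c, d) : ℕ × ℕ) ∈ Set.Icc 1 k ×ˢ Set.Icc 1 j from
    ⟨⟨h5, h6⟩, ⟨h7, h8⟩⟩) h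
  exact ⟨congrArg Prod.fst this, congrArg Prod.snd this⟩

lemma Fof_isFilling (hj : j ≤ n) (hS : S ⊆ Finset.Icc 1 (k * n)) (hScard : S.card = k * j)
    (hG : IsFilling j k G) (hH : IsFilling (n - j) k H) :
    IsFilling n k (Fof n k j S G H) := by
  exact isFilling_glue n k j hj S hS hScard
    (fun a b => invStd S (G a b))
    (fun a b => invStd (Finset.Icc 1 (k * n) \ S) (H a b))
    (fun a b h1 h2 h3 h4 => invStd_mem (G_mem hScard hG h1 h2 h3 h4))
    (fun a b h1 h2 h3 h4 => invStd_mem (H_mem hS hScard hj hH h1 h2 h3 h4))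
    (fun a b c d h1 h2 h3 h4 h5 h6 h7 h8 h => by
      have e : G a b = G c d := by
        have e1 := stdR_invStd (G_mem hScard hG h1 h2 h3 h4)
        have e2 := stdR_invStd (G_mem hScard hG h5 h6 h7 h8)
        rw [← e1, ← e2]
        exact congrArg _ h
      exact G_injOn hG h1 h2 h3 h4 h5 h6 h7 h8 e)
    (fun a b c d h1 h2 h3 h4 h5 h6 h7 h8 h => by
      have e : H a b = H c d := by
        have e1 := stdR_invStd (H_mem hS hScard hj hH h1 h2 h3 h4)
        have e2 := stdR_invStd (H_mem hS hScard hj hH h5 h6 h7 h8)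
        rw [← e1, ← e2]
        exact congrArg _ h
      have := hH.2.1.2.1 (show ((a, b) : ℕ × ℕ) ∈ Set.Icc 1 k ×ˢ Set.Icc 1 (n - j) from
        ⟨⟨h1, h2⟩, ⟨h3, h4⟩⟩) (show ((c, d) : ℕ × ℕ) ∈ Set.Icc 1 k ×ˢ Set.Icc 1 (n - j) from
        ⟨⟨h5, h6⟩, ⟨h7, h8⟩⟩) e
      exact ⟨congrArg Prod.fst this, congrArg Prod.snd this⟩)
    (fun a b h1 h2 h3 h4 => by
      rw [invStd_lt_iff (G_mem hScard hG h1 (by omega) h3 h4)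
        (G_mem hScard hG (by omega) (by omega) h3 h4)]
      exact hG.2.2 a b h1 h2 h3 h4)
    (fun a b h1 h2 h3 h4 => by
      rw [invStd_lt_iff (H_mem hS hScard hj hH h1 (by omega) h3 h4)
        (H_mem hS hScard hj hH (by omega) (by omega) h3 h4)]
      exact hH.2.2 a b h1 h2 h3 h4)

lemma Fof_hasM_G (U : Set (ℕ → ℕ → ℕ)) (hScard : S.card = k * j)
    (hG : IsFilling j k G) {i : ℕ} (hi1 : 1 ≤ i) (hi2 : i ≤ j - 1) :
    (∃ P ∈ U, MatchAt 2 k P (Fof n k j S G H) i) ↔ (∃ P ∈ U, MatchAt 2 k P G i) := by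
  refine exists_congr fun P => and_congr_right fun _ =>
    matchAt_iff k i i (Fof n k j S G H) G ?_ P
  intro a b c d h1 h2 h3 h4 h5 h6 h7 h8
  have e1 : Fof n k j S G H a (i - 1 + b) = invStd S (G a (i - 1 + b)) :=
    if_pos ⟨h1, h2, by omega, by omega⟩
  have e2 : Fof n k j S G H c (i - 1 + d) = invStd S (G c (i - 1 + d)) :=
    if_pos ⟨h5, h6, by omega, by omega⟩
  rw [e1, e2, invStd_lt_iff (G_mem hScard hG h1 h2 (by omega) (by omega))
    (G_mem hScard hG h5 h6 (by omega) (by omega))]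

lemma Fof_hasM_H (U : Set (ℕ → ℕ → ℕ)) (hj : j ≤ n) (hS : S ⊆ Finset.Icc 1 (k * n))
    (hScard : S.card = k * j) (hH : IsFilling (n - j) k H) {i : ℕ}
    (hi1 : j + 1 ≤ i) (hi2 : i ≤ n - 1) :
    (∃ P ∈ U, MatchAt 2 k P (Fof n k j S G H) i)
      ↔ (∃ P ∈ U, MatchAt 2 k P H (i - j)) := by
  refine exists_congr fun P => and_congr_right fun _ =>
    matchAt_iff k i (i - j) (Fof n k j S G H) H ?_ P
  intro a b c d h1 h2 h3 h4 h5 h6 h7 h8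
  have hc1 : ¬(1 ≤ a ∧ a ≤ k ∧ 1 ≤ i - 1 + b ∧ i - 1 + b ≤ j) := by
    intro hc; omega
  have hc2 : ¬(1 ≤ c ∧ c ≤ k ∧ 1 ≤ i - 1 + d ∧ i - 1 + d ≤ j) := by
    intro hc; omega
  have e1 : Fof n k j S G H a (i - 1 + b)
      = invStd (Finset.Icc 1 (k * n) \ S) (H a (i - 1 + b - j)) := by
    rw [Fof]
    rw [if_neg hc1, if_pos (show 1 ≤ a ∧ a ≤ k ∧ j + 1 ≤ i - 1 + b ∧ i - 1 + b ≤ n from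
      ⟨h1, h2, by omega, by omega⟩)]
  have e2 : Fof n k j S G H c (i - 1 + d)
      = invStd (Finset.Icc 1 (k * n) \ S) (H c (i - 1 + d - j)) := by
    rw [Fof]
    rw [if_neg hc2, if_pos (show 1 ≤ c ∧ c ≤ k ∧ j + 1 ≤ i - 1 + d ∧ i - 1 + d ≤ n from
      ⟨h5, h6, by omega, by omega⟩)]
  have eb : i - 1 + b - j = i - j - 1 + b := by omega
  have ed : i - 1 + d - j = i - j - 1 + d := by omega
  rw [e1, e2, eb, ed, invStd_lt_iff
    (H_mem hS hScard hj hH h1 h2 (by omega) (by omega))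
    (H_mem hS hScard hj hH h5 h6 (by omega) (by omega))]

lemma colsSet_Fof (hj : j ≤ n) (hS : S ⊆ Finset.Icc 1 (k * n)) (hScard : S.card = k * j)
    (hG : IsFilling j k G) (hH : IsFilling (n - j) k H) :
    colsSet k j (Fof n k j S G H) = S := by
  apply Finset.eq_of_subset_of_card_le
  · intro y hy
    rcases Finset.mem_image.1 hy with ⟨q, hq, rfl⟩
    simp only [Finset.mem_product, Finset.mem_Icc] at hq
    have e : Fof n k j S G H q.1 q.2 = invStd S (G q.1 q.2) :=
      if_pos ⟨hq.1.1, hq.1.2, hq.2.1, hq.2.2⟩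
    rw [e]
    exact invStd_mem (G_mem hScard hG hq.1.1 hq.1.2 hq.2.1 hq.2.2)
  · rw [hScard, colsSet_card hj (Fof_isFilling hj hS hScard hG hH)]

lemma Gof_Fof (hj : j ≤ n) (hS : S ⊆ Finset.Icc 1 (k * n)) (hScard : S.card = k * j)
    (hG : IsFilling j k G) (hH : IsFilling (n - j) k H) :
    Gof k j (Fof n k j S G H) = G := by
  funext a b
  by_cases hr : 1 ≤ a ∧ a ≤ k ∧ 1 ≤ b ∧ b ≤ j
  · have e : Gof k j (Fof n k j S G H) a b
        = stdR (colsSet k j (Fof n k j S G H)) (Fof n k j S G H a b) := if_pos hr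
    rw [e, colsSet_Fof hj hS hScard hG hH]
    have e2 : Fof n k j S G H a b = invStd S (G a b) := if_pos hr
    rw [e2, stdR_invStd (G_mem hScard hG hr.1 hr.2.1 hr.2.2.1 hr.2.2.2)]
  · have e : Gof k j (Fof n k j S G H) a b = 0 := if_neg hr
    rw [e]
    by_contra hne
    exact hr (hG.1 a b fun h0 => hne h0.symm)

lemma Hof_Fof (hj : j ≤ n) (hS : S ⊆ Finset.Icc 1 (k * n)) (hScard : S.card = k * j)
    (hG : IsFilling j k G) (hH : IsFilling (n - j) k H) :
    Hof n k j (Fof n k j S G H) = H := by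
  funext a b
  by_cases hr : 1 ≤ a ∧ a ≤ k ∧ 1 ≤ b ∧ b ≤ n - j
  · have e : Hof n k j (Fof n k j S G H) a b
        = stdR (Finset.Icc 1 (k * n) \ colsSet k j (Fof n k j S G H))
          (Fof n k j S G H a (j + b)) := if_pos hr
    rw [e, colsSet_Fof hj hS hScard hG hH]
    have hc1 : ¬(1 ≤ a ∧ a ≤ k ∧ 1 ≤ j + b ∧ j + b ≤ j) := by intro hc; omega
    have e2 : Fof n k j S G H a (j + b)
        = invStd (Finset.Icc 1 (k * n) \ S) (H a (j + b - j)) := by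
      rw [Fof, if_neg hc1, if_pos (show 1 ≤ a ∧ a ≤ k ∧ j + 1 ≤ j + b ∧ j + b ≤ n from
        ⟨hr.1, hr.2.1, by omega, by omega⟩)]
    have e3 : j + b - j = b := by omega
    rw [e2, e3, stdR_invStd (H_mem hS hScard hj hH hr.1 hr.2.1 hr.2.2.1 hr.2.2.2)]
  · have e : Hof n k j (Fof n k j S G H) a b = 0 := if_neg hr
    rw [e]
    by_contra hne
    exact hr (hH.1 a b fun h0 => hne h0.symm)

end Backward

section Inj

variable {n k j : ℕ}

lemma F_eq_of (hj : j ≤ n) {F F' : ℕ → ℕ → ℕ} (hF : IsFilling n k F)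
    (hF' : IsFilling n k F') (hSe : colsSet k j F = colsSet k j F')
    (hGe : Gof k j F = Gof k j F') (hHe : Hof n k j F = Hof n k j F') : F = F' := by
  funext a b
  by_cases hr1 : 1 ≤ a ∧ a ≤ k ∧ 1 ≤ b ∧ b ≤ j
  · have e := congrFun (congrFun hGe a) b
    have e1 : Gof k j F a b = stdR (colsSet k j F) (F a b) := if_pos hr1
    have e2 : Gof k j F' a b = stdR (colsSet k j F') (F' a b) := if_pos hr1
    rw [e1, e2, hSe] at e
    exact stdR_inj (hSe ▸ mem_colsSet hr1.1 hr1.2.1 hr1.2.2.1 hr1.2.2.2)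
      (mem_colsSet hr1.1 hr1.2.1 hr1.2.2.1 hr1.2.2.2) e
  · by_cases hr2 : 1 ≤ a ∧ a ≤ k ∧ j + 1 ≤ b ∧ b ≤ n
    · have e := congrFun (congrFun hHe a) (b - j)
      have hrr : 1 ≤ a ∧ a ≤ k ∧ 1 ≤ b - j ∧ b - j ≤ n - j :=
        ⟨hr2.1, hr2.2.1, by omega, by omega⟩
      have e1 : Hof n k j F a (b - j)
          = stdR (Finset.Icc 1 (k * n) \ colsSet k j F) (F a (j + (b - j))) := if_pos hrr
      have e2 : Hof n k j F' a (b - j)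
          = stdR (Finset.Icc 1 (k * n) \ colsSet k j F') (F' a (j + (b - j))) := if_pos hrr
      have e3 : j + (b - j) = b := by omega
      rw [e1, e2, e3, hSe] at e
      exact stdR_inj (hSe ▸ F_mem_T hj hF hr2.1 hr2.2.1 hr2.2.2.1 hr2.2.2.2)
        (F_mem_T hj hF' hr2.1 hr2.2.1 hr2.2.2.1 hr2.2.2.2) e
    · have z1 : F a b = 0 := by
        by_contra hne
        have := hF.1 a b hne
        omega
      have z2 : F' a b = 0 := by
        by_contra hne
        have := hF'.1 a b hne
        omega
      rw [z1, z2]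

end Inj

lemma count_split (n k j : ℕ) (U : Set (ℕ → ℕ → ℕ)) (hj : j ≤ n) :
    Nat.card {F : ℕ → ℕ → ℕ // IsFilling n k F ∧
        (∀ i, 1 ≤ i → i ≤ j - 1 → ∃ P ∈ U, MatchAt 2 k P F i) ∧
        (∀ i, j + 1 ≤ i → i ≤ n - 1 → ¬ ∃ P ∈ U, MatchAt 2 k P F i)} =
      (k * n).choose (k * j) * (fullCount j k U * noMatchCount (n - j) k U) := by
  classical
  let T1 := {S : Finset ℕ // S ⊆ Finset.Icc 1 (k * n) ∧ S.card = k * j}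
  let T2 := {G : ℕ → ℕ → ℕ // IsFilling j k G ∧
      ∀ i, 1 ≤ i → i ≤ j - 1 → ∃ P ∈ U, MatchAt 2 k P G i}
  let T3 := {H : ℕ → ℕ → ℕ // IsFilling (n - j) k H ∧
      ∀ i, 1 ≤ i → i ≤ n - j - 1 → ¬ ∃ P ∈ U, MatchAt 2 k P H i}
  let Φ : {F : ℕ → ℕ → ℕ // IsFilling n k F ∧
      (∀ i, 1 ≤ i → i ≤ j - 1 → ∃ P ∈ U, MatchAt 2 k P F i) ∧
      (∀ i, j + 1 ≤ i → i ≤ n - 1 → ¬ ∃ P ∈ U, MatchAt 2 k P F i)} → T1 × T2 × T3 :=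
    fun F =>
    (⟨colsSet k j F.1, colsSet_subset hj F.2.1, colsSet_card hj F.2.1⟩,
     ⟨Gof k j F.1, Gof_isFilling hj F.2.1,
       fun i hi1 hi2 => (Gof_hasM U hj F.2.1 hi1 hi2).1 (F.2.2.1 i hi1 hi2)⟩,
     ⟨Hof n k j F.1, Hof_isFilling hj F.2.1,
       fun i hi1 hi2 hmm => F.2.2.2 (j + i) (by omega) (by omega)
         ((Hof_hasM U hj F.2.1 (by omega) (by omega)).2
           (by rw [Nat.add_sub_cancel_left]; exact hmm))⟩)
  have hinj : Function.Injective Φ := by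
    intro F F' h
    have h1 : colsSet k j F.1 = colsSet k j F'.1 :=
      congrArg (fun t : T1 × T2 × T3 => t.1.1) h
    have h2 : Gof k j F.1 = Gof k j F'.1 :=
      congrArg (fun t : T1 × T2 × T3 => t.2.1.1) h
    have h3 : Hof n k j F.1 = Hof n k j F'.1 :=
      congrArg (fun t : T1 × T2 × T3 => t.2.2.1) h
    exact Subtype.ext (F_eq_of hj F.2.1 F'.2.1 h1 h2 h3)
  have hsurj : Function.Surjective Φ := by
    rintro ⟨⟨S, hS, hScard⟩, ⟨G, hG, hGfull⟩, ⟨H, hH, hHno⟩⟩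
    have hFf : IsFilling n k (Fof n k j S G H) := Fof_isFilling hj hS hScard hG hH
    refine ⟨⟨Fof n k j S G H, hFf, ?_, ?_⟩, ?_⟩
    · intro i hi1 hi2
      exact (Fof_hasM_G U hScard hG hi1 hi2).2 (hGfull i hi1 hi2)
    · intro i hi1 hi2 hmm
      exact hHno (i - j) (by omega) (by omega)
        ((Fof_hasM_H U hj hS hScard hH hi1 hi2).1 hmm)
    · exact Prod.ext (Subtype.ext (colsSet_Fof hj hS hScard hG hH))
        (Prod.ext (Subtype.ext (Gof_Fof hj hS hScard hG hH))
          (Subtype.ext (Hof_Fof hj hS hScard hG hH)))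
  have h1 : Nat.card T1 = (k * n).choose (k * j) := by
    have e : T1 ≃ {S : Finset ℕ // S ∈ Finset.powersetCard (k * j) (Finset.Icc 1 (k * n))} :=
      Equiv.subtypeEquivRight (fun S => (Finset.mem_powersetCard).symm)
    rw [Nat.card_congr e, Nat.card_eq_finsetCard, Finset.card_powersetCard, Nat.card_Icc]
    simp
  calc Nat.card {F : ℕ → ℕ → ℕ // IsFilling n k F ∧
        (∀ i, 1 ≤ i → i ≤ j - 1 → ∃ P ∈ U, MatchAt 2 k P F i) ∧
        (∀ i, j + 1 ≤ i → i ≤ n - 1 → ¬ ∃ P ∈ U, MatchAt 2 k P F i)}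
      = Nat.card (T1 × T2 × T3) := Nat.card_eq_of_bijective Φ ⟨hinj, hsurj⟩
    _ = Nat.card T1 * (Nat.card T2 * Nat.card T3) := by
        rw [Nat.card_prod, Nat.card_prod]
    _ = (k * n).choose (k * j) * (fullCount j k U * noMatchCount (n - j) k U) := by
        rw [h1]; rfl

lemma card_congr_iff {p q : (ℕ → ℕ → ℕ) → Prop} (h : ∀ F, p F ↔ q F) :
    Nat.card {F : ℕ → ℕ → ℕ // p F} = Nat.card {F : ℕ → ℕ → ℕ // q F} :=
  Nat.card_congr (Equiv.subtypeEquivRight h)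

lemma isFilling_zero_iff (k : ℕ) (F : ℕ → ℕ → ℕ) :
    IsFilling 0 k F ↔ F = fun _ _ => 0 := by
  constructor
  · intro hF
    funext a b
    by_contra hne
    have := hF.1 a b hne
    omega
  · rintro rfl
    refine ⟨fun i j h => absurd rfl h, ?_, fun i j h1 h2 h3 h4 => by omega⟩
    have h1 : (Set.Icc 1 0 : Set ℕ) = ∅ := Set.Icc_eq_empty (by omega)
    have h2 : (Set.Icc 1 (k * 0) : Set ℕ) = ∅ := by rw [Nat.mul_zero]; exact h1
    rw [h1, h2, Set.prod_empty]
    exact Set.bijOn_empty _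

lemma count_zero_eq_one (k : ℕ) (p : (ℕ → ℕ → ℕ) → Prop) (hp : p (fun _ _ => 0)) :
    Nat.card {F : ℕ → ℕ → ℕ // IsFilling 0 k F ∧ p F} = 1 := by
  rw [Nat.card_eq_one_iff_unique]
  constructor
  · constructor
    intro F G
    apply Subtype.ext
    rw [(isFilling_zero_iff k F.1).1 F.2.1, (isFilling_zero_iff k G.1).1 G.2.1]
  · exact ⟨⟨fun _ _ => 0, (isFilling_zero_iff k _).2 rfl, hp⟩⟩

lemma noMatchCount_zero (k : ℕ) (U : Set (ℕ → ℕ → ℕ)) : noMatchCount 0 k U = 1 :=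
  count_zero_eq_one k _ (fun i hi1 hi2 => absurd hi2 (by omega))

lemma fullCount_zero (k : ℕ) (U : Set (ℕ → ℕ → ℕ)) : fullCount 0 k U = 1 :=
  count_zero_eq_one k _ (fun i hi1 hi2 => absurd hi2 (by omega))

lemma card_or (n k : ℕ) (p q r : (ℕ → ℕ → ℕ) → Prop)
    (hpq : ∀ F, p F ↔ (q F ∨ r F)) (hdisj : ∀ F, q F → r F → False) :
    Nat.card {F : ℕ → ℕ → ℕ // IsFilling n k F ∧ p F}
      = Nat.card {F : ℕ → ℕ → ℕ // IsFilling n k F ∧ q F}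
        + Nat.card {F : ℕ → ℕ → ℕ // IsFilling n k F ∧ r F} := by
  classical
  haveI := fillings_finite n k q
  haveI := fillings_finite n k r
  rw [← Nat.card_sum]
  apply Nat.card_congr
  refine Equiv.ofBijective (fun F => if h : q F.1 then Sum.inl ⟨F.1, F.2.1, h⟩
    else Sum.inr ⟨F.1, F.2.1, ((hpq F.1).1 F.2.2).resolve_left h⟩) ⟨?_, ?_⟩
  · intro F G h
    simp only [] at h
    by_cases hF : q F.1 <;> by_cases hG : q G.1
    · rw [dif_pos hF, dif_pos hG] at h
      injection h with h'
      have h'' := congrArg Subtype.val h'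
      exact Subtype.ext h''
    · rw [dif_pos hF, dif_neg hG] at h
      exact absurd h (by simp)
    · rw [dif_neg hF, dif_pos hG] at h
      exact absurd h (by simp)
    · rw [dif_neg hF, dif_neg hG] at h
      injection h with h'
      have h'' := congrArg Subtype.val h'
      exact Subtype.ext h''
  · rintro (⟨F, hF, hq⟩ | ⟨F, hF, hr⟩)
    · refine ⟨⟨F, hF, (hpq F).2 (Or.inl hq)⟩, ?_⟩
      simp only [dif_pos hq]
    · refine ⟨⟨F, hF, (hpq F).2 (Or.inr hr)⟩, ?_⟩
      simp only [dif_neg (fun hq => hdisj F hq hr)]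

lemma telescope (n : ℕ) (hn : 1 ≤ n) (N P : ℕ → ℕ)
    (h0 : N 0 = P 0) (hmid : ∀ j, 1 ≤ j → j ≤ n - 1 → N j = P (j - 1) + P j)
    (hlast : N n = P (n - 1)) :
    ∑ j ∈ Finset.range (n + 1), (-1 : ℚ) ^ j * (N j : ℚ) = 0 := by
  have key : ∀ m, m ≤ n - 1 →
      ∑ j ∈ Finset.range (m + 1), (-1 : ℚ) ^ j * (N j : ℚ) = (-1) ^ m * (P m : ℚ) := by
    intro m
    induction m with
    | zero => intro _; simp [h0]
    | succ m ih =>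
      intro hm
      rw [Finset.sum_range_succ, ih (by omega), hmid (m + 1) (by omega) hm,
        Nat.add_sub_cancel]
      push_cast
      ring
  obtain ⟨m, rfl⟩ : ∃ m, n = m + 1 := ⟨n - 1, by omega⟩
  rw [Finset.sum_range_succ, key m (by omega), hlast, Nat.add_sub_cancel]
  ring

noncomputable def Ncnt (n k : ℕ) (U : Set (ℕ → ℕ → ℕ)) (j : ℕ) : ℕ :=
  Nat.card {F : ℕ → ℕ → ℕ // IsFilling n k F ∧
    (∀ i, 1 ≤ i → i ≤ j - 1 → ∃ P ∈ U, MatchAt 2 k P F i) ∧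
    (∀ i, j + 1 ≤ i → i ≤ n - 1 → ¬ ∃ P ∈ U, MatchAt 2 k P F i)}

noncomputable def Pcnt (n k : ℕ) (U : Set (ℕ → ℕ → ℕ)) (m : ℕ) : ℕ :=
  Nat.card {F : ℕ → ℕ → ℕ // IsFilling n k F ∧
    (∀ i, 1 ≤ i → i ≤ m → ∃ P ∈ U, MatchAt 2 k P F i) ∧
    (∀ i, m + 1 ≤ i → i ≤ n - 1 → ¬ ∃ P ∈ U, MatchAt 2 k P F i)}

lemma Ncnt_eq (n k j : ℕ) (U : Set (ℕ → ℕ → ℕ)) (hj : j ≤ n) :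
    Ncnt n k U j = (k * n).choose (k * j) * (fullCount j k U * noMatchCount (n - j) k U) :=
  count_split n k j U hj

lemma Ncnt_zero (n k : ℕ) (U : Set (ℕ → ℕ → ℕ)) : Ncnt n k U 0 = Pcnt n k U 0 := by
  apply card_congr_iff
  intro F
  constructor
  · rintro ⟨hF, h1, h2⟩
    exact ⟨hF, fun i hi1 hi2 => absurd hi2 (by omega), h2⟩
  · rintro ⟨hF, h1, h2⟩
    exact ⟨hF, fun i hi1 hi2 => absurd hi2 (by omega), h2⟩

lemma Ncnt_last (n k : ℕ) (U : Set (ℕ → ℕ → ℕ)) (hn : 1 ≤ n) :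
    Ncnt n k U n = Pcnt n k U (n - 1) := by
  apply card_congr_iff
  intro F
  constructor
  · rintro ⟨hF, h1, h2⟩
    exact ⟨hF, h1, fun i hi1 hi2 => absurd hi1 (by omega)⟩
  · rintro ⟨hF, h1, h2⟩
    exact ⟨hF, h1, fun i hi1 hi2 => absurd hi1 (by omega)⟩

lemma Ncnt_mid (n k : ℕ) (U : Set (ℕ → ℕ → ℕ)) (j : ℕ) (hj1 : 1 ≤ j) (hj2 : j ≤ n - 1) :
    Ncnt n k U j = Pcnt n k U (j - 1) + Pcnt n k U j := by
  apply card_or n k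
  · intro F
    constructor
    · rintro ⟨h1, h2⟩
      by_cases hj' : ∃ P ∈ U, MatchAt 2 k P F j
      · right
        refine ⟨fun i hi1 hi2 => ?_, h2⟩
        by_cases hij : i = j
        · subst hij; exact hj'
        · exact h1 i hi1 (by omega)
      · left
        refine ⟨fun i hi1 hi2 => h1 i hi1 hi2, fun i hi1 hi2 => ?_⟩
        by_cases hij : i = j
        · subst hij; exact hj'
        · exact h2 i (by omega) hi2
    · rintro (⟨h1, h2⟩ | ⟨h1, h2⟩)
      · exact ⟨h1, fun i hi1 hi2 => h2 i (by omega) hi2⟩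
      · exact ⟨fun i hi1 hi2 => h1 i hi1 (by omega), h2⟩
  · rintro F ⟨h1, h2⟩ ⟨h3, h4⟩
    exact h2 j (by omega) (by omega) (h3 j (by omega) (by omega))


end Aux

/-- Theorem: `(1 + Σ_{n≥1} A_{n,k}^Υ t^n/(kn)!) · (1 + Σ_{n≥1} (-1)^n full_n^Υ t^n/(kn)!) = 1`
as formal power series in `t` over `ℚ`. -/
theorem stmt3 (k : ℕ) (hk : 1 ≤ k) (U : Set (ℕ → ℕ → ℕ))
    (hU : ∀ P ∈ U, IsFilling 2 k P) :
    (PowerSeries.mk fun n => if n = 0 then (1 : ℚ) else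
        (noMatchCount n k U : ℚ) / ((k * n).factorial : ℚ)) *
    (PowerSeries.mk fun n => if n = 0 then (1 : ℚ) else
        (-1) ^ n * (fullCount n k U : ℚ) / ((k * n).factorial : ℚ)) = 1 := by
  classical
  apply PowerSeries.ext
  intro n
  rw [PowerSeries.coeff_mul, PowerSeries.coeff_one]
  simp only [PowerSeries.coeff_mk]
  by_cases hn : n = 0
  · subst hn
    simp
  · rw [if_neg hn]
    have hterm : ∀ p : ℕ × ℕ,
        (if p.1 = 0 then (1 : ℚ) else
          (noMatchCount p.1 k U : ℚ) / ((k * p.1).factorial : ℚ))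
          * (if p.2 = 0 then (1 : ℚ) else
          (-1) ^ p.2 * (fullCount p.2 k U : ℚ) / ((k * p.2).factorial : ℚ))
        = ((noMatchCount p.1 k U : ℚ) / ((k * p.1).factorial : ℚ))
          * ((-1) ^ p.2 * (fullCount p.2 k U : ℚ) / ((k * p.2).factorial : ℚ)) := by
      intro p
      congr 1
      · split_ifs with h
        · rw [h, noMatchCount_zero]; simp
        · rfl
      · split_ifs with h
        · rw [h, fullCount_zero]; simp
        · rfl
    rw [Finset.sum_congr rfl (fun p _ => hterm p)]
    rw [Finset.Nat.sum_antidiagonal_eq_sum_range_succ_mk]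
    have hterm2 : ∀ i ∈ Finset.range (n + 1),
        ((noMatchCount i k U : ℚ) / ((k * i).factorial : ℚ))
          * ((-1) ^ (n - i) * (fullCount (n - i) k U : ℚ) / ((k * (n - i)).factorial : ℚ))
        = (-1) ^ (n - i) * (Ncnt n k U (n - i) : ℚ) / ((k * n).factorial : ℚ) := by
      intro i hi
      rw [Finset.mem_range] at hi
      have hin : i ≤ n := by omega
      have hj : n - i ≤ n := by omega
      have hNc := Ncnt_eq n k (n - i) U hj
      rw [show n - (n - i) = i by omega] at hNc
      have hadd : k * (n - i) + k * i = k * n := by rw [← Nat.mul_add]; congr 1; omega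
      have hfact : (k * n).choose (k * (n - i)) * (k * (n - i)).factorial
          * (k * i).factorial = (k * n).factorial := by
        have h := Nat.choose_mul_factorial_mul_factorial
          (show k * (n - i) ≤ k * n by omega)
        rwa [show k * n - k * (n - i) = k * i by omega] at h
      have hne1 : ((k * i).factorial : ℚ) ≠ 0 := Nat.cast_ne_zero.2 (Nat.factorial_ne_zero _)
      have hne2 : ((k * (n - i)).factorial : ℚ) ≠ 0 :=
        Nat.cast_ne_zero.2 (Nat.factorial_ne_zero _)
      have hne3 : ((k * n).factorial : ℚ) ≠ 0 := Nat.cast_ne_zero.2 (Nat.factorial_ne_zero _)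
      have hq : ((k * n).factorial : ℚ) = ((k * n).choose (k * (n - i)) : ℚ)
          * ((k * (n - i)).factorial : ℚ) * ((k * i).factorial : ℚ) := by
        exact_mod_cast hfact.symm
      have hqN : (Ncnt n k U (n - i) : ℚ) = ((k * n).choose (k * (n - i)) : ℚ)
          * ((fullCount (n - i) k U : ℚ) * (noMatchCount i k U : ℚ)) := by
        exact_mod_cast hNc
      field_simp
      rw [hqN, hq]
      ring
    rw [Finset.sum_congr rfl hterm2]
    have hrefl : ∑ i ∈ Finset.range (n + 1),
        (-1 : ℚ) ^ (n - i) * (Ncnt n k U (n - i) : ℚ) / ((k * n).factorial : ℚ)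
        = ∑ j ∈ Finset.range (n + 1),
        (-1 : ℚ) ^ j * (Ncnt n k U j : ℚ) / ((k * n).factorial : ℚ) := by
      have h := Finset.sum_range_reflect
        (fun j => (-1 : ℚ) ^ j * (Ncnt n k U j : ℚ) / ((k * n).factorial : ℚ)) (n + 1)
      simpa only [Nat.add_sub_cancel] using h
    rw [hrefl, ← Finset.sum_div,
      telescope n (by omega) (Ncnt n k U) (Pcnt n k U) (Ncnt_zero n k U)
        (fun j hj1 hj2 => Ncnt_mid n k U j hj1 hj2) (Ncnt_last n k U (by omega))]
    exact zero_div _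
end

section
/- Let j, k ≥ 1 and let Υ ⊆ F_{j,k}. Let A_{n,k}^Υ be the number of F ∈ F_{n,k} with no Υ-matches (A_{0,k}^Υ = 1), and let E_{n,k}^Υ be the number of F ∈ F_{n,k} having exactly one Υ-match, which moreover starts at position n−j+1. Then the following identity of formal power series in t over ℚ holds: Σ_{n≥1} E_{n,k}^Υ t^n/(kn)! = 1 + (t/k! − 1)·(1 + Σ_{n≥1} A_{n,k}^Υ t^n/(kn)!). -/
/-- `F` has an `Υ`-match starting at position `i` (for `k × j` patterns `Υ`). -/
def HasUMatch (n j k : ℕ) (U : Set (ℕ → ℕ → ℕ)) (F : ℕ → ℕ → ℕ) (i : ℕ) : Prop :=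
  1 ≤ i ∧ i + j ≤ n + 1 ∧ ∃ P ∈ U, MatchAt j k P F i

/-- `A_{n,k}^Υ`: the number of fillings `F ∈ F_{n,k}` with no `Υ`-matches. -/
noncomputable def noMatchCountJ (n j k : ℕ) (U : Set (ℕ → ℕ → ℕ)) : ℕ :=
  Nat.card {F : ℕ → ℕ → ℕ // IsFilling n k F ∧ ∀ i, ¬ HasUMatch n j k U F i}

/-- `E_{n,k}^Υ`: the number of fillings `F ∈ F_{n,k}` with exactly one `Υ`-match,
which starts at position `n - j + 1`. -/
noncomputable def endMatchCount (n j k : ℕ) (U : Set (ℕ → ℕ → ℕ)) : ℕ :=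
  Nat.card {F : ℕ → ℕ → ℕ // IsFilling n k F ∧
    ∀ i, HasUMatch n j k U F i ↔ i = n + 1 - j}

lemma filling_out {n k : ℕ} {F : ℕ → ℕ → ℕ} (h : IsFilling n k F) {i j : ℕ}
    (hij : ¬(1 ≤ i ∧ i ≤ k ∧ 1 ≤ j ∧ j ≤ n)) : F i j = 0 := by
  by_contra hne; exact hij (h.1 i j hne)

lemma filling_mem {n k : ℕ} {F : ℕ → ℕ → ℕ} (h : IsFilling n k F) {i j : ℕ}
    (h1 : 1 ≤ i) (h2 : i ≤ k) (h3 : 1 ≤ j) (h4 : j ≤ n) :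
    1 ≤ F i j ∧ F i j ≤ k * n := by
  have := h.2.1.mapsTo (Set.mem_prod.2 ⟨⟨h1, h2⟩, ⟨h3, h4⟩⟩ :
    (i, j) ∈ Set.Icc 1 k ×ˢ Set.Icc 1 n)
  simpa using this

lemma filling_col_lt {n k : ℕ} {F : ℕ → ℕ → ℕ} (h : IsFilling n k F) {i i' x : ℕ}
    (h1 : 1 ≤ i) (hii' : i < i') (h2 : i' ≤ k) (h3 : 1 ≤ x) (h4 : x ≤ n) :
    F i x < F i' x := by
  induction i' with
  | zero => omega
  | succ m ih =>
    rcases Nat.lt_or_ge i m with hlt | hge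
    · exact lt_trans (ih hlt (by omega)) (h.2.2 m x (by omega) (by omega) h3 h4)
    · have him : i = m := by omega
      subst him
      exact h.2.2 i x h1 (by omega) h3 h4

/-- `up c m` is the `m`-th smallest element of `c` (1-based), `0` out of range. -/
noncomputable def up (c : Finset ℕ) (m : ℕ) : ℕ :=
  if h : 1 ≤ m ∧ m ≤ c.card then (c.orderIsoOfFin rfl ⟨m - 1, by omega⟩ : ℕ) else 0

noncomputable def down (c : Finset ℕ) (m : ℕ) : ℕ :=
  if h : m ∈ c then ((c.orderIsoOfFin rfl).symm ⟨m, h⟩ : Fin c.card) + 1 else 0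

lemma up_eq_emb {c : Finset ℕ} {m : ℕ} (h1 : 1 ≤ m) (h2 : m ≤ c.card) :
    up c m = c.orderEmbOfFin rfl ⟨m - 1, by omega⟩ := by
  rw [up, dif_pos ⟨h1, h2⟩, Finset.coe_orderIsoOfFin_apply]

lemma up_mem {c : Finset ℕ} {m : ℕ} (h1 : 1 ≤ m) (h2 : m ≤ c.card) : up c m ∈ c := by
  rw [up, dif_pos ⟨h1, h2⟩]; exact (c.orderIsoOfFin rfl _).2

lemma up_zero_of_not {c : Finset ℕ} {m : ℕ} (h : ¬(1 ≤ m ∧ m ≤ c.card)) : up c m = 0 := by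
  rw [up, dif_neg h]

lemma up_lt_up_iff {c : Finset ℕ} {m m' : ℕ} (h1 : 1 ≤ m) (h2 : m ≤ c.card)
    (h1' : 1 ≤ m') (h2' : m' ≤ c.card) : up c m < up c m' ↔ m < m' := by
  rw [up, dif_pos ⟨h1, h2⟩, up, dif_pos ⟨h1', h2'⟩]
  rw [Subtype.coe_lt_coe, OrderIso.lt_iff_lt, Fin.lt_def]
  simp only []
  omega

lemma up_inj {c : Finset ℕ} {m m' : ℕ} (h1 : 1 ≤ m) (h2 : m ≤ c.card)
    (h1' : 1 ≤ m') (h2' : m' ≤ c.card) (h : up c m = up c m') : m = m' := by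
  by_contra hne
  rcases Nat.lt_or_ge m m' with hlt | hge
  · exact absurd h (ne_of_lt ((up_lt_up_iff h1 h2 h1' h2').2 hlt))
  · have : m' < m := by omega
    exact absurd h.symm (ne_of_lt ((up_lt_up_iff h1' h2' h1 h2).2 this))

lemma down_spec {c : Finset ℕ} {m : ℕ} (h : m ∈ c) :
    1 ≤ down c m ∧ down c m ≤ c.card ∧ up c (down c m) = m := by
  rw [down, dif_pos h]
  set i := (c.orderIsoOfFin rfl).symm ⟨m, h⟩ with hi
  refine ⟨by omega, by have := i.2; omega, ?_⟩
  rw [up, dif_pos ⟨by omega, by have := i.2; omega⟩]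
  have : (⟨(i : ℕ) + 1 - 1, by have := i.2; omega⟩ : Fin c.card) = i := by
    apply Fin.ext; simp
  rw [this, hi, OrderIso.apply_symm_apply]

lemma up_surj {c : Finset ℕ} {x : ℕ} (h : x ∈ c) :
    ∃ m, 1 ≤ m ∧ m ≤ c.card ∧ up c m = x :=
  ⟨down c x, (down_spec h).1, (down_spec h).2.1, (down_spec h).2.2⟩

lemma down_up {c : Finset ℕ} {m : ℕ} (h1 : 1 ≤ m) (h2 : m ≤ c.card) :
    down c (up c m) = m := by
  have hm := up_mem h1 h2
  exact up_inj (down_spec hm).1 (down_spec hm).2.1 h1 h2 (down_spec hm).2.2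

lemma down_lt_down_iff {c : Finset ℕ} {m m' : ℕ} (hm : m ∈ c) (hm' : m' ∈ c) :
    down c m < down c m' ↔ m < m' := by
  conv_rhs => rw [← (down_spec hm).2.2, ← (down_spec hm').2.2]
  rw [up_lt_up_iff (down_spec hm).1 (down_spec hm).2.1 (down_spec hm').1 (down_spec hm').2.1]

lemma up_image (c : Finset ℕ) : (Finset.Icc 1 c.card).image (up c) = c := by
  ext x
  simp only [Finset.mem_image, Finset.mem_Icc]
  constructor
  · rintro ⟨m, ⟨h1, h2⟩, rfl⟩; exact up_mem h1 h2
  · intro hx; obtain ⟨m, h1, h2, h3⟩ := up_surj hx; exact ⟨m, ⟨h1, h2⟩, h3⟩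

/-- the gluing map: last column is `s` (sorted), earlier columns relabel `G` into
`Icc 1 (k*n) \ s`. -/
noncomputable def Phi (n k : ℕ) (s : Finset ℕ) (G : ℕ → ℕ → ℕ) : ℕ → ℕ → ℕ :=
  fun i x => if x = n then up s i else up (Finset.Icc 1 (k * n) \ s) (G i x)

section Main

variable {n k : ℕ} {s : Finset ℕ} {G : ℕ → ℕ → ℕ}

lemma c_card (hn : 1 ≤ n) (hs : s ⊆ Finset.Icc 1 (k * n)) (hcard : s.card = k) :
    (Finset.Icc 1 (k * n) \ s).card = k * (n - 1) := by
  rw [Finset.card_sdiff_of_subset hs, Nat.card_Icc, hcard]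
  obtain ⟨m, rfl⟩ := Nat.exists_eq_add_of_le hn
  have h1 : k * (1 + m) = k + k * m := by ring
  have h2 : k * (1 + m - 1) = k * m := by norm_num
  omega

lemma phi_isFilling (hn : 1 ≤ n) (hs : s ⊆ Finset.Icc 1 (k * n)) (hcard : s.card = k)
    (hG : IsFilling (n - 1) k G) : IsFilling n k (Phi n k s G) := by
  set c := Finset.Icc 1 (k * n) \ s with hc
  have hcc : c.card = k * (n - 1) := c_card hn hs hcard
  refine ⟨?_, ⟨?_, ?_, ?_⟩, ?_⟩
  · -- support
    intro i x hne
    rw [Phi] at hne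
    by_cases hx : x = n
    · rw [if_pos hx] at hne
      have : 1 ≤ i ∧ i ≤ s.card := by
        by_contra hcon; exact hne (up_zero_of_not hcon)
      omega
    · rw [if_neg hx] at hne
      have hr : 1 ≤ G i x ∧ G i x ≤ c.card := by
        by_contra hcon; exact hne (up_zero_of_not hcon)
      have := hG.1 i x (by omega)
      omega
  · -- mapsTo
    rintro ⟨i, x⟩ hm
    obtain ⟨⟨hi1, hi2⟩, hx1, hx2⟩ := Set.mem_prod.1 hm
    simp only [Set.mem_Icc] at hi1 hi2 hx1 hx2 ⊢
    by_cases hx : x = n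
    · simp only [Phi, if_pos hx]
      have := hs (up_mem (c := s) (m := i) (by omega) (by omega))
      simpa [Finset.mem_Icc] using this
    · simp only [Phi, if_neg hx]
      have hgm := filling_mem hG hi1 hi2 hx1 (by omega)
      have : up c (G i x) ∈ c := up_mem (by omega) (by omega)
      rw [hc, Finset.mem_sdiff, Finset.mem_Icc] at this
      exact this.1
  · -- injOn
    rintro ⟨i, x⟩ hm ⟨i', x'⟩ hm' heq
    obtain ⟨⟨hi1, hi2⟩, hx1, hx2⟩ := Set.mem_prod.1 hm
    obtain ⟨⟨hi1', hi2'⟩, hx1', hx2'⟩ := Set.mem_prod.1 hm'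
    simp only [Set.mem_Icc] at hi1 hi2 hx1 hx2 hi1' hi2' hx1' hx2'
    simp only [Phi] at heq
    by_cases hx : x = n <;> by_cases hx' : x' = n
    · rw [if_pos hx, if_pos hx'] at heq
      have := up_inj (c := s) (by omega) (by omega) (by omega) (by omega) heq
      simp [Prod.ext_iff, this, hx, hx']
    · rw [if_pos hx, if_neg hx'] at heq
      have h1 : up s i ∈ s := up_mem (by omega) (by omega)
      have hgm := filling_mem hG hi1' hi2' hx1' (by omega)
      have h2 : up c (G i' x') ∈ c := up_mem (by omega) (by omega)
      rw [hc, Finset.mem_sdiff] at h2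
      exact absurd (heq ▸ h1) h2.2
    · rw [if_neg hx, if_pos hx'] at heq
      have h1 : up s i' ∈ s := up_mem (by omega) (by omega)
      have hgm := filling_mem hG hi1 hi2 hx1 (by omega)
      have h2 : up c (G i x) ∈ c := up_mem (by omega) (by omega)
      rw [hc, Finset.mem_sdiff] at h2
      exact absurd (heq.symm ▸ h1) h2.2
    · rw [if_neg hx, if_neg hx'] at heq
      have hgm := filling_mem hG hi1 hi2 hx1 (by omega)
      have hgm' := filling_mem hG hi1' hi2' hx1' (by omega)
      have := up_inj (c := c) (by omega) (by omega) (by omega) (by omega) heq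
      exact hG.2.1.injOn (Set.mem_prod.2 ⟨⟨hi1, hi2⟩, hx1, by omega⟩)
        (Set.mem_prod.2 ⟨⟨hi1', hi2'⟩, hx1', by omega⟩) this
  · -- surjOn
    intro y hy
    rw [Set.mem_Icc] at hy
    by_cases hys : y ∈ s
    · obtain ⟨m, h1, h2, h3⟩ := up_surj hys
      refine ⟨(m, n), Set.mem_prod.2 ⟨⟨?_, ?_⟩, ?_, ?_⟩, ?_⟩ <;>
        simp [Phi, h3] <;> omega
    · have hyc : y ∈ c := by rw [hc, Finset.mem_sdiff, Finset.mem_Icc]; exact ⟨hy, hys⟩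
      obtain ⟨m, h1, h2, h3⟩ := up_surj hyc
      have hm : m ∈ Set.Icc 1 (k * (n - 1)) := by rw [Set.mem_Icc]; omega
      obtain ⟨⟨i, x⟩, hrect, hgix⟩ := hG.2.1.surjOn hm
      obtain ⟨⟨hi1, hi2⟩, hx1, hx2⟩ := Set.mem_prod.1 hrect
      simp only [Set.mem_Icc] at hi1 hi2 hx1 hx2
      refine ⟨(i, x), Set.mem_prod.2 ⟨⟨hi1, hi2⟩, hx1, by omega⟩, ?_⟩
      have hxn : x ≠ n := by omega
      simp only [Phi, if_neg hxn]
      simp only at hgix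
      rw [hgix, h3]
  · -- columns increase
    intro i x h1 h2 h3 h4
    by_cases hx : x = n
    · simp only [Phi, if_pos hx]
      exact (up_lt_up_iff (c := s) (m := i) (m' := i + 1)
        (by omega) (by omega) (by omega) (by omega)).2 (by omega)
    · simp only [Phi, if_neg hx]
      have hgm := filling_mem hG h1 (by omega) h3 (by omega)
      have hgm' := filling_mem hG (show 1 ≤ i + 1 by omega) (by omega) h3 (by omega)
      exact (up_lt_up_iff (c := c) (m := G i x) (m' := G (i + 1) x)
        (by omega) (by omega) (by omega) (by omega)).2
        (hG.2.2 i x h1 h2 h3 (by omega))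

end Main

section Main2

variable {n k j : ℕ} {s : Finset ℕ} {G : ℕ → ℕ → ℕ}

lemma phi_match (hn : 1 ≤ n) (hs : s ⊆ Finset.Icc 1 (k * n)) (hcard : s.card = k)
    (hG : IsFilling (n - 1) k G) {P : ℕ → ℕ → ℕ} {i0 : ℕ}
    (h1 : 1 ≤ i0) (h2 : i0 + j ≤ n) :
    MatchAt j k P (Phi n k s G) i0 ↔ MatchAt j k P G i0 := by
  set c := Finset.Icc 1 (k * n) \ s with hc
  have hcc : c.card = k * (n - 1) := c_card hn hs hcard
  have key : ∀ a b, 1 ≤ a → a ≤ k → 1 ≤ b → b ≤ j →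
      Phi n k s G a (i0 - 1 + b) = up c (G a (i0 - 1 + b)) ∧
      1 ≤ G a (i0 - 1 + b) ∧ G a (i0 - 1 + b) ≤ c.card := by
    intro a b ha1 ha2 hb1 hb2
    have hxne : i0 - 1 + b ≠ n := by omega
    have hgm := filling_mem hG ha1 ha2 (show 1 ≤ i0 - 1 + b by omega)
      (show i0 - 1 + b ≤ n - 1 by omega)
    exact ⟨by simp [Phi, hxne, hc], by omega, by omega⟩
  have hbr : ∀ a b cc d, 1 ≤ a → a ≤ k → 1 ≤ b → b ≤ j → 1 ≤ cc → cc ≤ k → 1 ≤ d → d ≤ j →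
      (Phi n k s G a (i0 - 1 + b) < Phi n k s G cc (i0 - 1 + d) ↔
        G a (i0 - 1 + b) < G cc (i0 - 1 + d)) := by
    intro a b cc d ha1 ha2 hb1 hb2 hc1 hc2 hd1 hd2
    obtain ⟨e1, r1, r2⟩ := key a b ha1 ha2 hb1 hb2
    obtain ⟨e2, r3, r4⟩ := key cc d hc1 hc2 hd1 hd2
    rw [e1, e2]
    exact up_lt_up_iff r1 r2 r3 r4
  constructor <;> intro hM a b cc d ha1 ha2 hb1 hb2 hc1 hc2 hd1 hd2
  · rw [← hbr a b cc d ha1 ha2 hb1 hb2 hc1 hc2 hd1 hd2]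
    exact hM a b cc d ha1 ha2 hb1 hb2 hc1 hc2 hd1 hd2
  · rw [hbr a b cc d ha1 ha2 hb1 hb2 hc1 hc2 hd1 hd2]
    exact hM a b cc d ha1 ha2 hb1 hb2 hc1 hc2 hd1 hd2

lemma phi_inj (hn : 1 ≤ n) {s' : Finset ℕ} {G' : ℕ → ℕ → ℕ}
    (hs : s ⊆ Finset.Icc 1 (k * n)) (hcard : s.card = k) (hG : IsFilling (n - 1) k G)
    (hs' : s' ⊆ Finset.Icc 1 (k * n)) (hcard' : s'.card = k) (hG' : IsFilling (n - 1) k G')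
    (heq : Phi n k s G = Phi n k s' G') : s = s' ∧ G = G' := by
  have hcol : ∀ i, up s i = up s' i := fun i => by
    have := congrFun (congrFun heq i) n
    simpa [Phi] using this
  have hss : s = s' := by
    have h1 : s = (Finset.Icc 1 k).image (up s) := by
      conv_lhs => rw [← up_image s]
      rw [hcard]
    have h2 : s' = (Finset.Icc 1 k).image (up s') := by
      conv_lhs => rw [← up_image s']
      rw [hcard']
    rw [h1, h2]
    exact Finset.image_congr (fun x _ => hcol x)
  subst hss
  refine ⟨rfl, ?_⟩
  funext i x
  by_cases hin : 1 ≤ i ∧ i ≤ k ∧ 1 ≤ x ∧ x ≤ n - 1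
  · have hxn : x ≠ n := by omega
    have hfx := congrFun (congrFun heq i) x
    simp only [Phi, if_neg hxn] at hfx
    have hgm := filling_mem hG hin.1 hin.2.1 hin.2.2.1 hin.2.2.2
    have hgm' := filling_mem hG' hin.1 hin.2.1 hin.2.2.1 hin.2.2.2
    have hcc := c_card hn hs hcard
    exact up_inj (by omega) (by omega) (by omega) (by omega) hfx
  · rw [filling_out hG hin, filling_out hG' hin]

end Main2

section Surj

variable {n k : ℕ} {F : ℕ → ℕ → ℕ}

lemma sF_sub (hF : IsFilling n k F) (hn : 1 ≤ n) :
    (Finset.Icc 1 k).image (fun r => F r n) ⊆ Finset.Icc 1 (k * n) := by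
  intro y hy
  simp only [Finset.mem_image, Finset.mem_Icc] at hy ⊢
  obtain ⟨r, ⟨h1, h2⟩, rfl⟩ := hy
  exact filling_mem hF h1 h2 hn le_rfl

lemma sF_card (hF : IsFilling n k F) (hn : 1 ≤ n) :
    ((Finset.Icc 1 k).image (fun r => F r n)).card = k := by
  rw [Finset.card_image_of_injOn, Nat.card_Icc]
  · omega
  · intro r hr r' hr' hrr
    simp only [Finset.coe_Icc, Set.mem_Icc] at hr hr'
    have := hF.2.1.injOn (Set.mem_prod.2 ⟨⟨hr.1, hr.2⟩, hn, le_rfl⟩ :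
        (r, n) ∈ Set.Icc 1 k ×ˢ Set.Icc 1 n)
      (Set.mem_prod.2 ⟨⟨hr'.1, hr'.2⟩, hn, le_rfl⟩ :
        (r', n) ∈ Set.Icc 1 k ×ˢ Set.Icc 1 n) hrr
    exact (Prod.ext_iff.1 this).1

lemma col_eq_up (hF : IsFilling n k F) (hn : 1 ≤ n) {i : ℕ} (h1 : 1 ≤ i) (h2 : i ≤ k) :
    F i n = up ((Finset.Icc 1 k).image (fun r => F r n)) i := by
  set s := (Finset.Icc 1 k).image (fun r => F r n) with hsdef
  have hcard : s.card = k := sF_card hF hn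
  have hfs : ∀ t : Fin s.card, F ((t : ℕ) + 1) n ∈ s := by
    intro t
    have ht := t.2
    exact Finset.mem_image.2 ⟨(t : ℕ) + 1, Finset.mem_Icc.2 ⟨by omega, by omega⟩, rfl⟩
  have hmono : StrictMono (fun t : Fin s.card => F ((t : ℕ) + 1) n) := by
    intro t t' htt
    have ht' := t'.2
    exact filling_col_lt hF (by omega) (by exact_mod_cast Nat.succ_lt_succ htt)
      (by omega) hn le_rfl
  have huniq := Finset.orderEmbOfFin_unique (f := fun t : Fin s.card => F ((t : ℕ) + 1) n)
    (rfl : s.card = s.card) hfs hmono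
  have := congrFun huniq ⟨i - 1, by omega⟩
  simp only at this
  rw [up_eq_emb h1 (by omega), ← this]
  congr 1
  omega

end Surj

noncomputable def PsiS (n k : ℕ) (F : ℕ → ℕ → ℕ) : Finset ℕ :=
  (Finset.Icc 1 k).image (fun r => F r n)

noncomputable def PsiG (n k : ℕ) (F : ℕ → ℕ → ℕ) : ℕ → ℕ → ℕ :=
  fun i x => if 1 ≤ i ∧ i ≤ k ∧ 1 ≤ x ∧ x ≤ n - 1
    then down (Finset.Icc 1 (k * n) \ PsiS n k F) (F i x) else 0

section Surj2

variable {n k : ℕ} {F : ℕ → ℕ → ℕ}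

lemma Fmem_c (hF : IsFilling n k F) (hn : 1 ≤ n) {i x : ℕ}
    (h1 : 1 ≤ i) (h2 : i ≤ k) (h3 : 1 ≤ x) (h4 : x ≤ n - 1) :
    F i x ∈ Finset.Icc 1 (k * n) \ PsiS n k F := by
  rw [Finset.mem_sdiff, Finset.mem_Icc]
  refine ⟨filling_mem hF h1 h2 h3 (by omega), ?_⟩
  intro hmem
  obtain ⟨r, hr, hrn⟩ := Finset.mem_image.1 hmem
  rw [Finset.mem_Icc] at hr
  have := hF.2.1.injOn (Set.mem_prod.2 ⟨⟨hr.1, hr.2⟩, hn, le_rfl⟩ :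
      (r, n) ∈ Set.Icc 1 k ×ˢ Set.Icc 1 n)
    (Set.mem_prod.2 ⟨⟨h1, h2⟩, h3, by omega⟩ : (i, x) ∈ Set.Icc 1 k ×ˢ Set.Icc 1 n) hrn
  have hx : x = n := (Prod.ext_iff.1 this).2.symm
  omega

lemma psiG_isFilling (hF : IsFilling n k F) (hn : 1 ≤ n) :
    IsFilling (n - 1) k (PsiG n k F) := by
  set s := PsiS n k F with hsdef
  have hs : s ⊆ Finset.Icc 1 (k * n) := sF_sub hF hn
  have hcard : s.card = k := sF_card hF hn
  have hcc : (Finset.Icc 1 (k * n) \ PsiS n k F).card = k * (n - 1) := c_card hn hs hcard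
  refine ⟨?_, ⟨?_, ?_, ?_⟩, ?_⟩
  · intro i x hne
    by_contra hcon
    rw [PsiG, if_neg hcon] at hne
    exact hne rfl
  · rintro ⟨i, x⟩ hm
    obtain ⟨⟨hi1, hi2⟩, hx1, hx2⟩ := Set.mem_prod.1 hm
    simp only [Set.mem_Icc] at hi1 hi2 hx1 hx2 ⊢
    have hmem := Fmem_c hF hn hi1 hi2 hx1 hx2
    have := down_spec hmem
    simp only [PsiG, if_pos (⟨hi1, hi2, hx1, hx2⟩ : 1 ≤ i ∧ i ≤ k ∧ 1 ≤ x ∧ x ≤ n - 1)]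
    omega
  · rintro ⟨i, x⟩ hm ⟨i', x'⟩ hm' heq
    obtain ⟨⟨hi1, hi2⟩, hx1, hx2⟩ := Set.mem_prod.1 hm
    obtain ⟨⟨hi1', hi2'⟩, hx1', hx2'⟩ := Set.mem_prod.1 hm'
    simp only [Set.mem_Icc] at hi1 hi2 hx1 hx2 hi1' hi2' hx1' hx2'
    simp only [PsiG, if_pos (⟨hi1, hi2, hx1, hx2⟩ : 1 ≤ i ∧ i ≤ k ∧ 1 ≤ x ∧ x ≤ n - 1),
      if_pos (⟨hi1', hi2', hx1', hx2'⟩ : 1 ≤ i' ∧ i' ≤ k ∧ 1 ≤ x' ∧ x' ≤ n - 1)] at heq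
    have hmem := Fmem_c hF hn hi1 hi2 hx1 hx2
    have hmem' := Fmem_c hF hn hi1' hi2' hx1' hx2'
    have hFF : F i x = F i' x' := by
      rw [← (down_spec hmem).2.2, ← (down_spec hmem').2.2, heq]
    exact hF.2.1.injOn (Set.mem_prod.2 ⟨⟨hi1, hi2⟩, hx1, by omega⟩)
      (Set.mem_prod.2 ⟨⟨hi1', hi2'⟩, hx1', by omega⟩) hFF
  · intro y hy
    rw [Set.mem_Icc] at hy
    have hyc : up (Finset.Icc 1 (k * n) \ PsiS n k F) y ∈ Finset.Icc 1 (k * n) \ PsiS n k F :=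
      up_mem (by omega) (by omega)
    have hicc : up (Finset.Icc 1 (k * n) \ PsiS n k F) y ∈ Set.Icc 1 (k * n) := by
      have := (Finset.mem_sdiff.1 hyc).1
      rw [Finset.mem_Icc] at this
      rw [Set.mem_Icc]
      exact this
    obtain ⟨⟨i, x⟩, hrect, hfix⟩ := hF.2.1.surjOn hicc
    obtain ⟨⟨hi1, hi2⟩, hx1, hx2⟩ := Set.mem_prod.1 hrect
    simp only [Set.mem_Icc] at hi1 hi2 hx1 hx2
    simp only at hfix
    have hxn : x ≠ n := by
      intro hxn
      subst hxn
      have : F i x ∈ s := Finset.mem_image.2 ⟨i, Finset.mem_Icc.2 ⟨hi1, hi2⟩, rfl⟩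
      rw [hfix] at this
      exact (Finset.mem_sdiff.1 hyc).2 this
    refine ⟨(i, x), Set.mem_prod.2 ⟨⟨hi1, hi2⟩, hx1, by omega⟩, ?_⟩
    simp only [PsiG, if_pos (⟨hi1, hi2, hx1, by omega⟩ : 1 ≤ i ∧ i ≤ k ∧ 1 ≤ x ∧ x ≤ n - 1)]
    rw [hfix, down_up (by omega) (by omega)]
  · intro i x h1 h2 h3 h4
    have hmem := Fmem_c hF hn h1 (by omega) h3 h4
    have hmem' := Fmem_c hF hn (show 1 ≤ i + 1 by omega) (by omega) h3 h4
    simp only [PsiG, if_pos (⟨h1, by omega, h3, h4⟩ : 1 ≤ i ∧ i ≤ k ∧ 1 ≤ x ∧ x ≤ n - 1),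
      if_pos (⟨by omega, by omega, h3, h4⟩ : 1 ≤ i + 1 ∧ i + 1 ≤ k ∧ 1 ≤ x ∧ x ≤ n - 1)]
    rw [down_lt_down_iff hmem hmem']
    exact hF.2.2 i x h1 h2 h3 (by omega)

lemma phi_psi (hF : IsFilling n k F) (hn : 1 ≤ n) :
    Phi n k (PsiS n k F) (PsiG n k F) = F := by
  set s := PsiS n k F with hsdef
  have hcard : s.card = k := sF_card hF hn
  funext i x
  by_cases hx : x = n
  · subst hx
    simp only [Phi, if_pos rfl]
    by_cases hik : 1 ≤ i ∧ i ≤ k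
    · exact (col_eq_up hF hn hik.1 hik.2).symm
    · rw [up_zero_of_not (show ¬(1 ≤ i ∧ i ≤ s.card) by omega),
        filling_out hF (show ¬(1 ≤ i ∧ i ≤ k ∧ 1 ≤ x ∧ x ≤ x) by omega)]
      simp
  · simp only [Phi, if_neg hx]
    by_cases hin : 1 ≤ i ∧ i ≤ k ∧ 1 ≤ x ∧ x ≤ n - 1
    · simp only [PsiG, if_pos hin]
      exact (down_spec (Fmem_c hF hn hin.1 hin.2.1 hin.2.2.1 hin.2.2.2)).2.2
    · simp only [PsiG, if_neg hin]
      rw [up_zero_of_not (show ¬(1 ≤ 0 ∧ 0 ≤ (Finset.Icc 1 (k * n) \ s).card) by omega),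
        filling_out hF (show ¬(1 ≤ i ∧ i ≤ k ∧ 1 ≤ x ∧ x ≤ n) by omega)]

end Surj2

lemma filling_le {n k : ℕ} {F : ℕ → ℕ → ℕ} (h : IsFilling n k F) (i j : ℕ) :
    F i j ≤ k * n := by
  by_cases hz : F i j = 0
  · omega
  · obtain ⟨h1, h2, h3, h4⟩ := h.1 i j hz
    exact (filling_mem h h1 h2 h3 h4).2

lemma finite_sub (n k : ℕ) (p : (ℕ → ℕ → ℕ) → Prop) (hp : ∀ F, p F → IsFilling n k F) :
    Finite {F : ℕ → ℕ → ℕ // p F} := by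
  have : Function.Injective (fun F : {F : ℕ → ℕ → ℕ // p F} =>
      fun (i : Fin (k+1)) (j : Fin (n+1)) =>
        (⟨F.1 i j, Nat.lt_succ_of_le (filling_le (hp F.1 F.2) i j)⟩ : Fin (k * n + 1))) := by
    intro F G h
    apply Subtype.ext
    ext i j
    by_cases hin : 1 ≤ i ∧ i ≤ k ∧ 1 ≤ j ∧ j ≤ n
    · have := congrFun (congrFun h ⟨i, by omega⟩) ⟨j, by omega⟩
      simpa using congrArg Fin.val this
    · rw [filling_out (hp F.1 F.2) hin, filling_out (hp G.1 G.2) hin]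
  exact Finite.of_injective _ this

lemma noMatch_zero (j k : ℕ) (hj : 1 ≤ j) (U : Set (ℕ → ℕ → ℕ)) : noMatchCountJ 0 j k U = 1 := by
  have hzero : IsFilling 0 k (fun _ _ => 0) := by
    refine ⟨fun i x h => absurd rfl h, ⟨?_, ?_, ?_⟩, fun i x h1 h2 h3 h4 => by omega⟩
    · rintro ⟨i, x⟩ hm
      obtain ⟨-, hx1, hx2⟩ := Set.mem_prod.1 hm
      omega
    · rintro ⟨i, x⟩ hm
      obtain ⟨-, hx1, hx2⟩ := Set.mem_prod.1 hm
      omega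
    · intro y hy
      rw [Set.mem_Icc] at hy
      omega
  haveI : Nonempty {F : ℕ → ℕ → ℕ // IsFilling 0 k F ∧ ∀ i, ¬ HasUMatch 0 j k U F i} :=
    ⟨⟨fun _ _ => 0, hzero, fun i hi => by obtain ⟨h1, h2, -⟩ := hi; omega⟩⟩
  haveI : Subsingleton {F : ℕ → ℕ → ℕ // IsFilling 0 k F ∧ ∀ i, ¬ HasUMatch 0 j k U F i} := by
    constructor
    rintro ⟨F, hF, -⟩ ⟨G, hG, -⟩
    apply Subtype.ext
    funext i x
    show F i x = G i x
    rw [filling_out hF (by omega), filling_out hG (by omega)]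
  exact Nat.card_unique

lemma key_count (j k n : ℕ) (hj : 1 ≤ j) (hk : 1 ≤ k) (hn : 1 ≤ n)
    (U : Set (ℕ → ℕ → ℕ)) :
    endMatchCount n j k U + noMatchCountJ n j k U
      = (k * n).choose k * noMatchCountJ (n - 1) j k U := by
  classical
  set P : (ℕ → ℕ → ℕ) → Prop := fun F => IsFilling n k F ∧
    ∀ i, 1 ≤ i → i + j ≤ n → ¬∃ Q ∈ U, MatchAt j k Q F i with hP
  set q : (ℕ → ℕ → ℕ) → Prop := fun F => HasUMatch n j k U F (n + 1 - j) with hq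
  -- E = #{P ∧ q}
  have hE : endMatchCount n j k U = Nat.card {F : ℕ → ℕ → ℕ // P F ∧ q F} := by
    apply Nat.card_congr
    apply Equiv.subtypeEquivRight
    intro F
    constructor
    · rintro ⟨hF, hiff⟩
      refine ⟨⟨hF, fun i h1 h2 hex => ?_⟩, (hiff (n + 1 - j)).2 rfl⟩
      have := (hiff i).1 ⟨h1, by omega, hex⟩
      omega
    · rintro ⟨⟨hF, hnm⟩, hqq⟩
      refine ⟨hF, fun i => ⟨fun hum => ?_, fun hieq => hieq ▸ hqq⟩⟩
      obtain ⟨h1, h2, hex⟩ := hum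
      by_cases hle : i + j ≤ n
      · exact absurd hex (hnm i h1 hle)
      · omega
  -- A = #{P ∧ ¬q}
  have hA : noMatchCountJ n j k U = Nat.card {F : ℕ → ℕ → ℕ // P F ∧ ¬ q F} := by
    apply Nat.card_congr
    apply Equiv.subtypeEquivRight
    intro F
    constructor
    · rintro ⟨hF, hnall⟩
      exact ⟨⟨hF, fun i h1 h2 hex => hnall i ⟨h1, by omega, hex⟩⟩, hnall _⟩
    · rintro ⟨⟨hF, hnm⟩, hnq⟩
      refine ⟨hF, fun i hum => ?_⟩
      obtain ⟨h1, h2, hex⟩ := hum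
      by_cases hle : i + j ≤ n
      · exact hnm i h1 hle hex
      · have hieq : i = n + 1 - j := by omega
        subst hieq
        exact hnq ⟨h1, h2, hex⟩
  -- split
  haveI fin1 : Finite {F : ℕ → ℕ → ℕ // P F} :=
    finite_sub n k P (fun F hF => hF.1)
  haveI fin2 : Finite {F : ℕ → ℕ → ℕ // P F ∧ q F} :=
    finite_sub n k _ (fun F hF => hF.1.1)
  haveI fin3 : Finite {F : ℕ → ℕ → ℕ // P F ∧ ¬ q F} :=
    finite_sub n k _ (fun F hF => hF.1.1)
  have hsplit : Nat.card {F : ℕ → ℕ → ℕ // P F ∧ q F}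
      + Nat.card {F : ℕ → ℕ → ℕ // P F ∧ ¬ q F} = Nat.card {F : ℕ → ℕ → ℕ // P F} := by
    rw [← Nat.card_congr (Equiv.subtypeSubtypeEquivSubtypeInter P q),
      ← Nat.card_congr (Equiv.subtypeSubtypeEquivSubtypeInter P (fun F => ¬ q F)),
      ← Nat.card_sum]
    exact Nat.card_congr (Equiv.sumCompl (fun x : {F : ℕ → ℕ → ℕ // P F} => q x.1))
  rw [hE, hA, hsplit]
  -- bijection with pairs
  set T2 := {G : ℕ → ℕ → ℕ // IsFilling (n - 1) k G ∧ ∀ i, ¬ HasUMatch (n - 1) j k U G i}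
    with hT2
  set PS := {s : Finset ℕ // s ∈ Finset.powersetCard k (Finset.Icc 1 (k * n))} with hPS
  have hbij : Nat.card {F : ℕ → ℕ → ℕ // P F} = Nat.card (PS × T2) := by
    have hfun : ∀ p : PS × T2, P (Phi n k p.1.1 p.2.1) := by
      intro p
      obtain ⟨hsub, hcard⟩ := Finset.mem_powersetCard.1 p.1.2
      exact ⟨phi_isFilling hn hsub hcard p.2.2.1,
        fun i h1 h2 hex => by
          obtain ⟨Q, hQ, hm⟩ := hex
          exact p.2.2.2 i ⟨h1, by omega,
            Q, hQ, (phi_match hn hsub hcard p.2.2.1 h1 h2).1 hm⟩⟩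
    apply (Nat.card_eq_of_bijective
      (fun p : PS × T2 => ⟨Phi n k p.1.1 p.2.1, hfun p⟩) ?_).symm
    constructor
    · rintro ⟨⟨s, hsmem⟩, ⟨G, hG⟩⟩ ⟨⟨s', hsmem'⟩, ⟨G', hG'⟩⟩ heq
      obtain ⟨hsub, hcard⟩ := Finset.mem_powersetCard.1 hsmem
      obtain ⟨hsub', hcard'⟩ := Finset.mem_powersetCard.1 hsmem'
      have heq' : Phi n k s G = Phi n k s' G' := congrArg Subtype.val heq
      obtain ⟨h1, h2⟩ := phi_inj hn hsub hcard hG.1 hsub' hcard' hG'.1 heq'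
      exact Prod.ext (Subtype.ext h1) (Subtype.ext h2)
    · rintro ⟨F, hF, hnm⟩
      have hs : PsiS n k F ⊆ Finset.Icc 1 (k * n) := sF_sub hF hn
      have hcard : (PsiS n k F).card = k := sF_card hF hn
      have hGfill : IsFilling (n - 1) k (PsiG n k F) := psiG_isFilling hF hn
      have hGnm : ∀ i, ¬ HasUMatch (n - 1) j k U (PsiG n k F) i := by
        intro i hum
        obtain ⟨h1, h2, Q, hQ, hm⟩ := hum
        have hm' := (phi_match hn hs hcard hGfill h1 (by omega)).2 hm
        rw [phi_psi hF hn] at hm'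
        exact hnm i h1 (by omega) ⟨Q, hQ, hm'⟩
      refine ⟨⟨⟨PsiS n k F, Finset.mem_powersetCard.2 ⟨hs, hcard⟩⟩,
        ⟨PsiG n k F, hGfill, hGnm⟩⟩, ?_⟩
      apply Subtype.ext
      exact phi_psi hF hn
  rw [hbij, Nat.card_prod]
  congr 1
  · rw [hPS]
    have : Nat.card PS = (Finset.powersetCard k (Finset.Icc 1 (k * n))).card :=
      Nat.card_eq_finsetCard _
    rw [hPS] at this
    rw [this, Finset.card_powersetCard, Nat.card_Icc]
    simp

/-- Theorem: `Σ_{n≥1} E_{n,k}^Υ t^n/(kn)! = 1 + (t/k! - 1)·(1 + Σ_{n≥1} A_{n,k}^Υ t^n/(kn)!)`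
as formal power series in `t` over `ℚ`. -/
theorem stmt7 (j k : ℕ) (hj : 1 ≤ j) (hk : 1 ≤ k) (U : Set (ℕ → ℕ → ℕ))
    (hU : ∀ P ∈ U, IsFilling j k P) :
    (PowerSeries.mk fun n => if n = 0 then (0 : ℚ) else
        (endMatchCount n j k U : ℚ) / ((k * n).factorial : ℚ)) =
    1 + (PowerSeries.C ((k.factorial : ℚ))⁻¹ * PowerSeries.X - 1) *
      PowerSeries.mk (fun n => if n = 0 then (1 : ℚ) else
        (noMatchCountJ n j k U : ℚ) / ((k * n).factorial : ℚ)) := by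
  set c : ℚ := ((k.factorial : ℚ))⁻¹ with hc
  set A : PowerSeries ℚ := PowerSeries.mk (fun n => if n = 0 then (1 : ℚ) else
    (noMatchCountJ n j k U : ℚ) / ((k * n).factorial : ℚ)) with hAdef
  have hA0 : ∀ m : ℕ, (PowerSeries.coeff m) A
      = (noMatchCountJ m j k U : ℚ) / ((k * m).factorial : ℚ) := by
    intro m
    rw [hAdef, PowerSeries.coeff_mk]
    by_cases hm : m = 0
    · subst hm
      rw [if_pos rfl, noMatch_zero j k hj U]
      simp
    · rw [if_neg hm]
  have hprod : (PowerSeries.C c * PowerSeries.X - 1) * A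
      = PowerSeries.C c * (PowerSeries.X * A) - A := by ring
  ext n
  rw [PowerSeries.coeff_mk, hprod, map_add, map_sub, PowerSeries.coeff_C_mul]
  cases n with
  | zero =>
    rw [if_pos rfl, PowerSeries.coeff_zero_X_mul, hA0, PowerSeries.coeff_one]
    rw [noMatch_zero j k hj U]
    norm_num
  | succ m =>
    rw [if_neg (Nat.succ_ne_zero m), PowerSeries.coeff_succ_X_mul, hA0, hA0,
      PowerSeries.coeff_one, if_neg (Nat.succ_ne_zero m)]
    have hkey := key_count j k (m + 1) hj hk (by omega) U
    rw [Nat.add_sub_cancel] at hkey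
    set E := endMatchCount (m + 1) j k U with hE
    set An := noMatchCountJ (m + 1) j k U with hAn
    set Am := noMatchCountJ m j k U with hAm
    have hle : k ≤ k * (m + 1) := by nlinarith
    have hsub : k * (m + 1) - k = k * m := by rw [Nat.mul_succ]; omega
    have hfactN := Nat.choose_mul_factorial_mul_factorial hle
    rw [hsub] at hfactN
    have hfact : ((k * (m + 1)).choose k : ℚ) * (k.factorial : ℚ) * ((k * m).factorial : ℚ)
        = ((k * (m + 1)).factorial : ℚ) := by exact_mod_cast hfactN
    have hEA : (E : ℚ) = ((k * (m + 1)).choose k : ℚ) * (Am : ℚ) - (An : ℚ) := by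
      have : (E : ℚ) + (An : ℚ) = ((k * (m + 1)).choose k : ℚ) * (Am : ℚ) := by
        exact_mod_cast hkey
      linarith
    have hch : ((k * (m + 1)).choose k : ℚ) ≠ 0 :=
      Nat.cast_ne_zero.2 (Nat.choose_pos hle).ne'
    have hf2 : (k.factorial : ℚ) ≠ 0 := Nat.cast_ne_zero.2 (Nat.factorial_pos k).ne'
    have hf3 : ((k * m).factorial : ℚ) ≠ 0 := Nat.cast_ne_zero.2 (Nat.factorial_pos (k * m)).ne'
    rw [hEA, ← hfact, hc]
    field_simp
    ring
end
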